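/- arXiv:2001.01908 — 2 statements merged into one kernel-verified Lean document; each statement's English description precedes it below -/
import Mathlib

section
/- Suppose p ≥ 4 is an integer with p = kd for some integers k, d with 1 < k, d < p. Then for every integer q with 2k+2 ≤ q ≤ Φ*(p,d) + 2, the complete tripartite graph K(p,p,q) admits a strong orientation of diameter 2; hence its orientation number equals 2. -/
/-- `hasPath D u v n`: there is a directed walk of length `n` from `u` to `v` in digraph `D`. -/
def hasPath {V : Type*} (D : V → V → Prop) (u v : V) : ℕ → Prop
  | 0 => u = v
  | n + 1 => ∃ w, D u w ∧ hasPath D w v n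

/-- Directed distance in a digraph, `⊤` if unreachable. -/
noncomputable def ddist {V : Type*} (D : V → V → Prop) (u v : V) : ℕ∞ :=
  sInf {n : ℕ∞ | ∃ m : ℕ, hasPath D u v m ∧ n = m}

/-- Diameter of a digraph. -/
noncomputable def ddiam (V : Type*) (D : V → V → Prop) : ℕ∞ :=
  ⨆ u : V, ⨆ v : V, ddist D u v

/-- `D` is an orientation of the simple graph `G`: every arc lies on an edge, and each
edge gets exactly one direction. -/
def IsOrientation {V : Type*} (G : SimpleGraph V) (D : V → V → Prop) : Prop :=
  (∀ u v, D u v → G.Adj u v) ∧ ∀ u v, G.Adj u v → (D u v ↔ ¬ D v u)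

/-- A digraph is strong if every vertex can reach every other. -/
def IsStrong {V : Type*} (D : V → V → Prop) : Prop :=
  ∀ u v : V, ∃ m : ℕ, hasPath D u v m

/-- The orientation number of a graph: minimum diameter over strong orientations. -/
noncomputable def orientationNumber {V : Type*} (G : SimpleGraph V) : ℕ∞ :=
  sInf {n : ℕ∞ | ∃ D : V → V → Prop, IsOrientation G D ∧ IsStrong D ∧ ddiam V D = n}

/-- The complete tripartite graph `K(a,b,c)`. -/
def Ktri (a b c : ℕ) : SimpleGraph (Σ i : Fin 3, Fin (![a, b, c] i)) :=
  SimpleGraph.completeMultipartiteGraph fun i => Fin (![a, b, c] i)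

open Finset

/-- `Φ*(p,d)` (for `p = k·d`). -/
def PhiStar (k d p : ℕ) : ℕ :=
  ∑ x ∈ (Finset.Nat.antidiagonalTuple (2 * d) p).filter
      (fun x => ∀ i, 1 ≤ x i ∧ x i ≤ k - 1),
    ∏ i, k.choose (x i)


namespace Kppq

abbrev Code (k d : ℕ) := Fin (2*d) → Finset (Fin k)

def gApp (k d : ℕ) (g : Code k d) (i x : ℕ) : Prop :=
  ∃ (hi : i < 2*d) (hx : x < k), (⟨x,hx⟩ : Fin k) ∈ g ⟨i,hi⟩

def memA (k d : ℕ) (g : Code k d) (a : ℕ) : Prop := gApp k d g (a/k) (a%k)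
def memB (k d : ℕ) (g : Code k d) (b : ℕ) : Prop := gApp k d g (d + b/k) (b%k)

lemma gApp_iff (k d : ℕ) (g : Code k d) {i x : ℕ} (hi : i < 2*d) (hx : x < k) :
    gApp k d g i x ↔ (⟨x,hx⟩ : Fin k) ∈ g ⟨i,hi⟩ :=
  ⟨fun ⟨_,_,h⟩ => h, fun h => ⟨hi, hx, h⟩⟩

variable {k d : ℕ}

lemma div_lt_d (hk : 0 < k) {a : ℕ} (ha : a < k*d) : a / k < d :=
  Nat.div_lt_of_lt_mul (by omega)

lemma memA_iff (g : Code k d) {a : ℕ} (hk : 0 < k) (ha : a < k*d) :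
    memA k d g a ↔ (⟨a % k, Nat.mod_lt _ hk⟩ : Fin k) ∈ g ⟨a / k, by have := div_lt_d hk ha; omega⟩ :=
  gApp_iff _ _ _ _ _

lemma memB_iff (g : Code k d) {b : ℕ} (hk : 0 < k) (hb : b < k*d) :
    memB k d g b ↔ (⟨b % k, Nat.mod_lt _ hk⟩ : Fin k) ∈ g ⟨d + b / k, by have := div_lt_d hk hb; omega⟩ :=
  gApp_iff _ _ _ _ _

/-- build an A-vertex index from block i and offset x -/
lemma glue_lt (hi : i < d) (hx : x < k) : i * k + x < k * d := by
  have : i * k + x < (i+1) * k := by nlinarith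
  nlinarith

lemma glue_div (hx : x < k) : (i * k + x) / k = i := by
  rw [add_comm, Nat.add_mul_div_right _ _ (by omega : 0 < k), Nat.div_eq_of_lt hx]; omega

lemma glue_mod (hx : x < k) : (i * k + x) % k = x := by
  rw [add_comm, Nat.add_mul_mod_self_right, Nat.mod_eq_of_lt hx]

def gA (k d : ℕ) : Code k d := fun i => if i.val < d then univ else ∅
def gB (k d : ℕ) : Code k d := fun i => if i.val < d then ∅ else univ
def gG (k d : ℕ) (m : Fin k) : Code k d := fun i => if i.val < d then univ \ {m} else {m}

lemma sum_code (d c1 c2 : ℕ) :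
    ∑ i : Fin (2*d), (if i.val < d then c1 else c2) = d*c1 + d*c2 := by
  rw [Fin.sum_univ_eq_sum_range (fun i => if i < d then c1 else c2)]
  rw [Finset.range_eq_Ico, ← Finset.sum_Ico_consecutive _ (by omega : 0 ≤ d) (by omega : d ≤ 2*d)]
  rw [Finset.sum_congr rfl (fun i hi => if_pos (Finset.mem_Ico.1 hi).2),
    Finset.sum_congr rfl (g := fun _ => c2) (fun i hi => if_neg (by have := (Finset.mem_Ico.1 hi).1; omega)),
    Finset.sum_const, Finset.sum_const, Nat.card_Ico, Nat.card_Ico]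
  simp only [smul_eq_mul, Nat.sub_zero]
  congr 2
  omega

def Tgen (k d p : ℕ) : Finset (Code k d) :=
  Finset.univ.filter fun g => (∀ i, 1 ≤ (g i).card ∧ (g i).card ≤ k-1) ∧ (∑ i, (g i).card) = p

lemma card_gG_apply (hk : 1 < k) (m : Fin k) (i : Fin (2*d)) :
    (gG k d m i).card = if i.val < d then k-1 else 1 := by
  unfold gG
  split
  · rw [Finset.card_sdiff_of_subset (by simp), Finset.card_singleton, Finset.card_univ, Fintype.card_fin]
  · simp

lemma gG_mem_Tgen (hk : 1 < k) (m : Fin k) : gG k d m ∈ Tgen k d (k*d) := by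
  simp only [Tgen, Finset.mem_filter, Finset.mem_univ, true_and]
  constructor
  · intro i; rw [card_gG_apply hk]; split <;> omega
  · rw [Finset.sum_congr rfl (fun i _ => card_gG_apply hk m i), sum_code]
    have h1 : k - 1 + 1 = k := by omega
    calc d*(k-1) + d*1 = d*((k-1)+1) := by ring
    _ = k * d := by rw [h1, mul_comm]

lemma sum_gA (k d : ℕ) : ∑ i, (gA k d i).card = k*d := by
  have h : ∀ i : Fin (2*d), (gA k d i).card = if i.val < d then k else 0 := by
    intro i; by_cases hh : (i:ℕ) < d <;> simp [gA, hh]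
  rw [Finset.sum_congr rfl (fun i _ => h i), sum_code]; ring

lemma sum_gB (k d : ℕ) : ∑ i, (gB k d i).card = k*d := by
  have h : ∀ i : Fin (2*d), (gB k d i).card = if i.val < d then 0 else k := by
    intro i; by_cases hh : (i:ℕ) < d <;> simp [gB, hh]
  rw [Finset.sum_congr rfl (fun i _ => h i), sum_code]; ring

lemma gA_not_mem_Tgen (hk : 1 < k) (hd : 0 < d) : gA k d ∉ Tgen k d (k*d) := by
  simp only [Tgen, Finset.mem_filter, Finset.mem_univ, true_and, not_and]
  intro h
  have := (h ⟨0, by omega⟩).2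
  simp [gA, hd, Finset.card_univ] at this
  omega

lemma gB_not_mem_Tgen (hk : 1 < k) (hd : 0 < d) : gB k d ∉ Tgen k d (k*d) := by
  simp only [Tgen, Finset.mem_filter, Finset.mem_univ, true_and, not_and]
  intro h
  have := (h ⟨0, by omega⟩).1
  simp [gB, hd] at this


lemma card_Tgen (k d p : ℕ) : (Tgen k d p).card = PhiStar k d p := by
  classical
  rw [PhiStar]
  have hdisj : ∀ x ∈ (Finset.Nat.antidiagonalTuple (2 * d) p).filter
      (fun x => ∀ i, 1 ≤ x i ∧ x i ≤ k - 1), ∀ y ∈ (Finset.Nat.antidiagonalTuple (2 * d) p).filter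
      (fun x => ∀ i, 1 ≤ x i ∧ x i ≤ k - 1), x ≠ y →
      Disjoint (Fintype.piFinset fun i => Finset.powersetCard (x i) (Finset.univ : Finset (Fin k)))
               (Fintype.piFinset fun i => Finset.powersetCard (y i) Finset.univ) := by
    intro x _ y _ hxy
    rw [Finset.disjoint_left]
    intro g hgx hgy
    apply hxy
    funext i
    simp only [Fintype.mem_piFinset, Finset.mem_powersetCard] at hgx hgy
    rw [← (hgx i).2, ← (hgy i).2]
  have hT : Tgen k d p = ((Finset.Nat.antidiagonalTuple (2 * d) p).filter
      (fun x : Fin (2*d) → ℕ => ∀ i, 1 ≤ x i ∧ x i ≤ k - 1)).biUnion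
      (fun x => Fintype.piFinset fun i => Finset.powersetCard (x i) Finset.univ) := by
    ext g
    simp only [Tgen, Finset.mem_filter, Finset.mem_univ, true_and, Finset.mem_biUnion,
      Fintype.mem_piFinset, Finset.mem_powersetCard, Finset.Nat.mem_antidiagonalTuple]
    constructor
    · rintro ⟨h1, h2⟩
      exact ⟨fun i => (g i).card, ⟨h2, h1⟩, fun i => ⟨Finset.subset_univ _, rfl⟩⟩
    · rintro ⟨x, ⟨hsum, hb⟩, hg⟩
      have hc : ∀ i, (g i).card = x i := fun i => (hg i).2
      constructor
      · intro i; rw [hc i]; exact hb i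
      · rw [Finset.sum_congr rfl (fun i _ => hc i)]; exact hsum
  rw [hT, Finset.card_biUnion hdisj]
  apply Finset.sum_congr rfl
  intro x _
  rw [Fintype.card_piFinset]
  apply Finset.prod_congr rfl
  intro i _
  rw [Finset.card_powersetCard, Finset.card_univ, Fintype.card_fin]


structure GoodFam (k d q : ℕ) where
  F : Fin q → Code k d
  inj : Function.Injective F
  hsum : ∀ c, ∑ i, (F c i).card = k*d
  hval : ∀ c, F c = gA k d ∨ F c = gB k d ∨ ∀ i, (F c i).Nonempty ∧ F c i ≠ univ
  hA : ∃ c, F c = gA k d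
  hB : ∃ c, F c = gB k d
  hsep : ∀ (i : Fin (2*d)) (x y : Fin k), x ≠ y → ∃ c, x ∈ F c i ∧ y ∉ F c i

variable {k d q : ℕ}

lemma Tgen_good {p' : ℕ} {g : Code k d} (hk : 0 < k) (hg : g ∈ Tgen k d p') :
    ∀ i, (g i).Nonempty ∧ g i ≠ univ := by
  simp only [Tgen, Finset.mem_filter] at hg
  intro i
  obtain ⟨h1, h2⟩ := hg.2.1 i
  refine ⟨Finset.card_pos.1 (by omega), fun he => ?_⟩
  rw [he, Finset.card_univ, Fintype.card_fin] at h2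
  omega

lemma gA_ne_gB (hk : 0 < k) (hd : 0 < d) : gA k d ≠ gB k d := by
  intro h
  have := congrFun h ⟨0, by omega⟩
  simp only [gA, gB, if_pos hd] at this
  exact absurd (this ▸ Finset.mem_univ (⟨0, hk⟩ : Fin k)) (Finset.notMem_empty _)

lemma gA_ne_gG (hk : 0 < k) (hd : 0 < d) (m : Fin k) : gA k d ≠ gG k d m := by
  intro h
  have := congrFun h ⟨0, by omega⟩
  simp only [gA, gG, if_pos hd] at this
  have hm := this ▸ Finset.mem_univ m
  simp at hm

lemma gB_ne_gG (hk : 1 < k) (hd : 0 < d) (m : Fin k) : gB k d ≠ gG k d m := by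
  intro h
  have := congrFun h ⟨0, by omega⟩
  simp only [gB, gG, if_pos hd] at this
  obtain ⟨x, hx⟩ := Fintype.exists_ne_of_one_lt_card (by simp [hk]) m
  have : x ∈ (∅ : Finset (Fin k)) := by
    rw [this]; simp [hx]
  simp at this

lemma gG_inj (hd : 0 < d) : Function.Injective (gG k d) := by
  intro m m' h
  have := congrFun h ⟨d, by omega⟩
  simp only [gG, if_neg (lt_irrefl d)] at this
  exact Finset.singleton_injective this

lemma exists_goodFam (hk : 1 < k) (hd : 1 < d) (hq1 : 2*k+2 ≤ q)
    (hq2 : q ≤ PhiStar k d (k*d) + 2) : Nonempty (GoodFam k d q) := by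
  classical
  set specials : Finset (Code k d) := Finset.univ.image (gG k d) with hspec
  have hspeccard : specials.card ≤ k := by
    calc specials.card ≤ (Finset.univ : Finset (Fin k)).card := Finset.card_image_le
    _ = k := by simp
  set R : Finset (Code k d) := Tgen k d (k*d) \ specials with hRdef
  have hRcard : q - (2+k) ≤ R.card := by
    have h1 : (Tgen k d (k*d)).card - specials.card ≤ R.card := Finset.le_card_sdiff _ _
    rw [card_Tgen] at h1
    omega
  obtain ⟨t, hts, htc⟩ := Finset.exists_subset_card_eq hRcard
  let tail : Fin (q - (2+k)) → Code k d := fun j => (t.equivFin.symm (Fin.cast htc.symm j) : Code k d)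
  have htail_mem : ∀ j, tail j ∈ R := fun j => hts (t.equivFin.symm _).2
  have htail_inj : Function.Injective tail := by
    intro j j' h
    have := t.equivFin.symm.injective (Subtype.ext h)
    simpa [Fin.ext_iff] using congrArg Fin.val this
  have hq4 : 4 ≤ q := by omega
  let F : Fin q → Code k d := fun c =>
    if c.val = 0 then gA k d
    else if c.val = 1 then gB k d
    else if h : c.val < 2 + k then gG k d ⟨c.val - 2, by omega⟩
    else tail ⟨c.val - (2+k), by have := c.isLt; omega⟩
  have hk0 : 0 < k := by omega
  have hd0 : 0 < d := by omega
  have htail_tgen : ∀ j, tail j ∈ Tgen k d (k*d) := fun j => (Finset.mem_sdiff.1 (htail_mem j)).1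
  have htail_ne_spec : ∀ j (m : Fin k), tail j ≠ gG k d m := by
    intro j m h
    exact absurd (Finset.mem_sdiff.1 (htail_mem j)).2 (by
      simp only [not_not, hspec, Finset.mem_image]
      exact ⟨m, Finset.mem_univ m, h.symm⟩)
  refine ⟨⟨F, ?_, ?_, ?_, ?_, ?_, ?_⟩⟩
  · -- injective
    intro c c' h
    simp only [F] at h
    apply Fin.ext
    split_ifs at h with h1 h2 h3 h4 h5 h6 h7 h8 h9 h10 h11 h12 h13 h14 h15 h16
    all_goals first
      | omega
      | (exact absurd h (gA_ne_gB hk0 hd0))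
      | (exact absurd h.symm (gA_ne_gB hk0 hd0))
      | (exact absurd h (gA_ne_gG hk0 hd0 _))
      | (exact absurd h.symm (gA_ne_gG hk0 hd0 _))
      | (exact absurd h (gB_ne_gG hk hd0 _))
      | (exact absurd h.symm (gB_ne_gG hk hd0 _))
      | (exact absurd h.symm (fun hh => gA_not_mem_Tgen hk hd0 (hh ▸ htail_tgen _)))
      | (exact absurd h (fun hh => gA_not_mem_Tgen hk hd0 (hh.symm ▸ htail_tgen _)))
      | (exact absurd h.symm (fun hh => gB_not_mem_Tgen hk hd0 (hh ▸ htail_tgen _)))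
      | (exact absurd h (fun hh => gB_not_mem_Tgen hk hd0 (hh.symm ▸ htail_tgen _)))
      | (exact absurd h (htail_ne_spec _ _))
      | (exact absurd h.symm (htail_ne_spec _ _))
      | (have := congrArg Fin.val (gG_inj hd0 h); simp at this; omega)
      | (have := congrArg Fin.val (htail_inj h); simp at this; omega)
  · -- hsum
    intro c
    simp only [F]
    split_ifs with h1 h2 h3
    · exact sum_gA k d
    · exact sum_gB k d
    · exact (Finset.mem_filter.1 (gG_mem_Tgen hk _)).2.2
    · exact (Finset.mem_filter.1 (htail_tgen _)).2.2
  · -- hval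
    intro c
    simp only [F]
    split_ifs with h1 h2 h3
    · exact Or.inl rfl
    · exact Or.inr (Or.inl rfl)
    · exact Or.inr (Or.inr (Tgen_good hk0 (gG_mem_Tgen hk _)))
    · exact Or.inr (Or.inr (Tgen_good hk0 (htail_tgen _)))
  · exact ⟨⟨0, by omega⟩, by simp [F]⟩
  · exact ⟨⟨1, by omega⟩, by simp [F]⟩
  · -- hsep
    intro i x y hxy
    by_cases hi : i.val < d
    · refine ⟨⟨2 + y.val, by have := y.isLt; omega⟩, ?_⟩
      have hF : F ⟨2 + y.val, by have := y.isLt; omega⟩ = gG k d y := by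
        simp only [F]
        rw [if_neg (by omega), if_neg (by omega), dif_pos (by have := y.isLt; omega)]
        exact congrArg (gG k d) (Fin.ext (by simp))
      rw [hF]
      simp only [gG, if_pos hi]
      constructor
      · simp [hxy]
      · simp
    · refine ⟨⟨2 + x.val, by have := x.isLt; omega⟩, ?_⟩
      have hF : F ⟨2 + x.val, by have := x.isLt; omega⟩ = gG k d x := by
        simp only [F]
        rw [if_neg (by omega), if_neg (by omega), dif_pos (by have := x.isLt; omega)]
        exact congrArg (gG k d) (Fin.ext (by simp))
      rw [hF]
      simp only [gG, if_neg hi]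
      exact ⟨Finset.mem_singleton_self x, by simp [Ne.symm hxy]⟩


section Plem
variable (hk : 1 < k) (hd : 1 < d) (G : GoodFam k d q)
include hk hd

lemma memA_gA {a : ℕ} (ha : a < k*d) : memA k d (gA k d) a := by
  have h1 : a / k < d := div_lt_d (by omega) ha
  exact ⟨by omega, Nat.mod_lt _ (by omega), by simp [gA, h1]⟩

lemma memB_gB {b : ℕ} (hb : b < k*d) : memB k d (gB k d) b := by
  have hk0 : 0 < k := by omega
  have h1 : b / k < d := div_lt_d hk0 hb
  refine ⟨by omega, Nat.mod_lt _ hk0, ?_⟩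
  simp only [gB]
  rw [if_neg (Nat.not_lt.2 (Nat.le_add_right d _))]
  exact Finset.mem_univ _

omit hd in
lemma memB_gA_false (b : ℕ) : ¬ memB k d (gA k d) b := by
  rintro ⟨hi, hx, hm⟩
  simp only [gA] at hm
  rw [if_neg (Nat.not_lt.2 (Nat.le_add_right d _))] at hm
  exact Finset.notMem_empty _ hm

lemma memA_gB_false {a : ℕ} (ha : a < k*d) : ¬ memA k d (gB k d) a := by
  rintro ⟨hi, hx, hm⟩
  have h1 : a / k < d := div_lt_d (by omega) ha
  simp only [gB] at hm
  rw [if_pos h1] at hm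
  exact Finset.notMem_empty _ hm

lemma P2 {c c' : Fin q} (hcc : c ≠ c') :
    ∃ (i : Fin (2*d)) (x : Fin k), x ∈ G.F c' i ∧ x ∉ G.F c i := by
  by_contra hcon
  push_neg at hcon
  have hsub : ∀ i, G.F c' i ⊆ G.F c i := fun i x hx => hcon i x hx
  have hle : ∀ i ∈ (univ : Finset (Fin (2*d))), (G.F c' i).card ≤ (G.F c i).card :=
    fun i _ => Finset.card_le_card (hsub i)
  have hsame : ∑ i, (G.F c' i).card = ∑ i, (G.F c i).card := by rw [G.hsum, G.hsum]
  have heq := (Finset.sum_eq_sum_iff_of_le hle).1 hsame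
  have hfe : G.F c' = G.F c := funext fun i =>
    Finset.eq_of_subset_of_card_le (hsub i) (le_of_eq (heq i (Finset.mem_univ i)).symm)
  exact hcc (G.inj hfe).symm

lemma P3 {a : ℕ} (c : Fin q) (ha : a < k*d) (hna : ¬ memA k d (G.F c) a) :
    ∃ b, b < k*d ∧ memB k d (G.F c) b ∧ b / k = a / k := by
  have hk0 : 0 < k := by omega
  have had : a / k < d := div_lt_d hk0 ha
  rcases G.hval c with hA | hB | hgen
  · exact absurd (hA ▸ memA_gA hk hd ha) hna
  · refine ⟨(a/k)*k, ?_, ?_, ?_⟩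
    · have : (a/k)*k + 0 < k*d := glue_lt had hk0
      omega
    · rw [hB]; exact memB_gB hk hd (by have := glue_lt had hk0; omega)
    · have := glue_div (i := a/k) hk0
      simpa using this
  · obtain ⟨⟨x, hxmem⟩, -⟩ := hgen ⟨d + a/k, by omega⟩
    refine ⟨(a/k)*k + x.val, glue_lt had x.isLt, ?_, glue_div x.isLt⟩
    unfold memB gApp
    rw [glue_div x.isLt, glue_mod x.isLt]
    exact ⟨by omega, x.isLt, hxmem⟩

lemma P4 {a : ℕ} (c : Fin q) (ha : a < k*d) (hma : memA k d (G.F c) a) :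
    ∃ b, b < k*d ∧ ¬ memB k d (G.F c) b ∧ b / k ≠ a / k := by
  have hk0 : 0 < k := by omega
  set j : ℕ := if a / k = 0 then 1 else 0 with hj
  have hjd : j < d := by rw [hj]; split <;> omega
  have hjne : j ≠ a / k := by rw [hj]; split <;> omega
  rcases G.hval c with hA | hB | hgen
  · refine ⟨j*k, by have := glue_lt hjd hk0; omega, ?_, ?_⟩
    · rw [hA]; exact memB_gA_false hk _
    · rw [show j*k = j*k + 0 by omega, glue_div hk0]; exact hjne
  · exact absurd hma (hB ▸ memA_gB_false hk hd ha)
  · obtain ⟨-, hne⟩ := hgen ⟨d + j, by omega⟩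
    have hex : ∃ x : Fin k, x ∉ G.F c ⟨d + j, by omega⟩ := by
      by_contra hcon
      push_neg at hcon
      exact hne (Finset.eq_univ_iff_forall.2 hcon)
    obtain ⟨x, hx⟩ := hex
    refine ⟨j*k + x.val, glue_lt hjd x.isLt, ?_, ?_⟩
    · unfold memB gApp
      rw [glue_div x.isLt, glue_mod x.isLt]
      rintro ⟨hi, hxx, hm⟩
      exact hx hm
    · rw [glue_div x.isLt]; exact hjne

lemma P5 {b : ℕ} (c : Fin q) (hb : b < k*d) (hnb : ¬ memB k d (G.F c) b) :
    ∃ a, a < k*d ∧ memA k d (G.F c) a ∧ a / k ≠ b / k := by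
  have hk0 : 0 < k := by omega
  set j : ℕ := if b / k = 0 then 1 else 0 with hj
  have hjd : j < d := by rw [hj]; split <;> omega
  have hjne : j ≠ b / k := by rw [hj]; split <;> omega
  rcases G.hval c with hA | hB | hgen
  · refine ⟨j*k, by have := glue_lt hjd hk0; omega, ?_, ?_⟩
    · rw [hA]; exact memA_gA hk hd (by have := glue_lt hjd hk0; omega)
    · rw [show j*k = j*k + 0 by omega, glue_div hk0]; exact hjne
  · exact absurd (hB ▸ memB_gB hk hd hb) hnb
  · obtain ⟨⟨x, hxmem⟩, -⟩ := hgen ⟨j, by omega⟩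
    refine ⟨j*k + x.val, glue_lt hjd x.isLt, ?_, ?_⟩
    · unfold memA gApp
      rw [glue_div x.isLt, glue_mod x.isLt]
      exact ⟨by omega, x.isLt, hxmem⟩
    · rw [glue_div x.isLt]; exact hjne

lemma P6 {b : ℕ} (c : Fin q) (hb : b < k*d) (hmb : memB k d (G.F c) b) :
    ∃ a, a < k*d ∧ ¬ memA k d (G.F c) a ∧ a / k = b / k := by
  have hk0 : 0 < k := by omega
  have hbd : b / k < d := div_lt_d hk0 hb
  rcases G.hval c with hA | hB | hgen
  · exact absurd hmb (hA ▸ memB_gA_false hk b)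
  · refine ⟨(b/k)*k, by have := glue_lt hbd hk0; omega, ?_, ?_⟩
    · rw [hB]; exact memA_gB_false hk hd (by have := glue_lt hbd hk0; omega)
    · rw [show (b/k)*k = (b/k)*k + 0 by omega, glue_div hk0]
  · obtain ⟨-, hne⟩ := hgen ⟨b/k, by omega⟩
    have hex : ∃ x : Fin k, x ∉ G.F c ⟨b/k, by omega⟩ := by
      by_contra hcon
      push_neg at hcon
      exact hne (Finset.eq_univ_iff_forall.2 hcon)
    obtain ⟨x, hx⟩ := hex
    refine ⟨(b/k)*k + x.val, glue_lt hbd x.isLt, ?_, glue_div x.isLt⟩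
    unfold memA gApp
    rw [glue_div x.isLt, glue_mod x.isLt]
    rintro ⟨hi, hxx, hm⟩
    exact hx hm

lemma P7A {a a' : ℕ} (ha : a < k*d) (ha' : a' < k*d) (hne : a ≠ a') (hdiv : a / k = a' / k) :
    ∃ c, memA k d (G.F c) a ∧ ¬ memA k d (G.F c) a' := by
  have hk0 : 0 < k := by omega
  have hmod : a % k ≠ a' % k := by
    have h1 := Nat.div_add_mod a k
    have h2 := Nat.div_add_mod a' k
    have h3 : k * (a/k) = k * (a'/k) := by rw [hdiv]
    omega
  obtain ⟨c, hc1, hc2⟩ := G.hsep ⟨a / k, by have := div_lt_d hk0 ha; omega⟩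
    ⟨a % k, Nat.mod_lt _ hk0⟩ ⟨a' % k, Nat.mod_lt _ hk0⟩ (by simp [Fin.ext_iff, hmod])
  refine ⟨c, ⟨by have := div_lt_d hk0 ha; omega, Nat.mod_lt _ hk0, hc1⟩, ?_⟩
  rintro ⟨hi, hx, hm⟩
  have hfin : (⟨a'/k, hi⟩ : Fin (2*d)) = ⟨a/k, by have := div_lt_d hk0 ha; omega⟩ :=
    Fin.ext hdiv.symm
  rw [hfin] at hm
  exact hc2 hm

lemma P7B {b b' : ℕ} (hb : b < k*d) (hb' : b' < k*d) (hne : b ≠ b') (hdiv : b / k = b' / k) :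
    ∃ c, memB k d (G.F c) b ∧ ¬ memB k d (G.F c) b' := by
  have hk0 : 0 < k := by omega
  have hmod : b % k ≠ b' % k := by
    have h1 := Nat.div_add_mod b k
    have h2 := Nat.div_add_mod b' k
    have h3 : k * (b/k) = k * (b'/k) := by rw [hdiv]
    omega
  obtain ⟨c, hc1, hc2⟩ := G.hsep ⟨d + b / k, by have := div_lt_d hk0 hb; omega⟩
    ⟨b % k, Nat.mod_lt _ hk0⟩ ⟨b' % k, Nat.mod_lt _ hk0⟩ (by simp [Fin.ext_iff, hmod])
  refine ⟨c, ⟨by have := div_lt_d hk0 hb; omega, Nat.mod_lt _ hk0, hc1⟩, ?_⟩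
  rintro ⟨hi, hx, hm⟩
  have hfin : (⟨d + b'/k, hi⟩ : Fin (2*d)) = ⟨d + b/k, by have := div_lt_d hk0 hb; omega⟩ :=
    Fin.ext (by simp [hdiv])
  rw [hfin] at hm
  exact hc2 hm

end Plem

variable {p q : ℕ} {F : Fin q → Code k d}

def Vt (p q : ℕ) := Σ i : Fin 3, Fin (![p,p,q] i)

def Dor (p k d q : ℕ) (F : Fin q → Code k d) (u v : Vt p q) : Prop :=
  (u.1.val = 0 ∧ v.1.val = 1 ∧ u.2.val / k = v.2.val / k) ∨
  (u.1.val = 1 ∧ v.1.val = 0 ∧ u.2.val / k ≠ v.2.val / k) ∨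
  (u.1.val = 0 ∧ v.1.val = 2 ∧ ∃ h : v.2.val < q, memA k d (F ⟨v.2.val, h⟩) u.2.val) ∨
  (u.1.val = 2 ∧ v.1.val = 0 ∧ ∃ h : u.2.val < q, ¬ memA k d (F ⟨u.2.val, h⟩) v.2.val) ∨
  (u.1.val = 1 ∧ v.1.val = 2 ∧ ∃ h : v.2.val < q, memB k d (F ⟨v.2.val, h⟩) u.2.val) ∨
  (u.1.val = 2 ∧ v.1.val = 1 ∧ ∃ h : u.2.val < q, ¬ memB k d (F ⟨u.2.val, h⟩) v.2.val)

example (a : ℕ) (h : a < p) : a < ![p,p,q] 0 := by simpa using h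
example (a : ℕ) (h : a < p) : a < ![p,p,q] 1 := by simpa using h
example (a : ℕ) (h : a < q) : a < ![p,p,q] 2 := by simpa using h

def mkA (p q : ℕ) (a : ℕ) (ha : a < p) : Vt p q := ⟨0, ⟨a, by simpa using ha⟩⟩
def mkB (p q : ℕ) (b : ℕ) (hb : b < p) : Vt p q := ⟨1, ⟨b, by simpa using hb⟩⟩
def mkC (p : ℕ) {q : ℕ} (c : Fin q) : Vt p q := ⟨2, ⟨c.val, by simpa using c.isLt⟩⟩

lemma Ktri_adj {a b c : ℕ} {u v : Σ i : Fin 3, Fin (![a,b,c] i)} :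
    (Ktri a b c).Adj u v ↔ u.1 ≠ v.1 := by
  simp [Ktri]

lemma Dor_not_same {u v : Vt p q} (h : u.1.val = v.1.val) : ¬ Dor p k d q F u v := by
  rintro (⟨h1,h2,_⟩|⟨h1,h2,_⟩|⟨h1,h2,_⟩|⟨h1,h2,_⟩|⟨h1,h2,_⟩|⟨h1,h2,_⟩) <;> omega

lemma Dor_01 {u v : Vt p q} (hu : u.1.val = 0) (hv : v.1.val = 1) :
    Dor p k d q F u v ↔ u.2.val / k = v.2.val / k := by
  constructor
  · rintro (⟨h1,h2,h⟩|⟨h1,h2,_⟩|⟨h1,h2,_⟩|⟨h1,h2,_⟩|⟨h1,h2,_⟩|⟨h1,h2,_⟩)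
    · exact h
    all_goals omega
  · intro h; exact Or.inl ⟨hu, hv, h⟩

lemma Dor_10 {u v : Vt p q} (hu : u.1.val = 1) (hv : v.1.val = 0) :
    Dor p k d q F u v ↔ u.2.val / k ≠ v.2.val / k := by
  constructor
  · rintro (⟨h1,h2,_⟩|⟨h1,h2,h⟩|⟨h1,h2,_⟩|⟨h1,h2,_⟩|⟨h1,h2,_⟩|⟨h1,h2,_⟩)
    · omega
    · exact h
    all_goals omega
  · intro h; exact Or.inr (Or.inl ⟨hu, hv, h⟩)

lemma Dor_02 {u v : Vt p q} (hu : u.1.val = 0) (hv : v.1.val = 2) (hq : v.2.val < q) :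
    Dor p k d q F u v ↔ memA k d (F ⟨v.2.val, hq⟩) u.2.val := by
  constructor
  · rintro (⟨h1,h2,_⟩|⟨h1,h2,_⟩|⟨h1,h2,h⟩|⟨h1,h2,_⟩|⟨h1,h2,_⟩|⟨h1,h2,_⟩)
    · omega
    · omega
    · exact h.2
    all_goals omega
  · intro h; exact Or.inr (Or.inr (Or.inl ⟨hu, hv, hq, h⟩))

lemma Dor_20 {u v : Vt p q} (hu : u.1.val = 2) (hv : v.1.val = 0) (hq : u.2.val < q) :
    Dor p k d q F u v ↔ ¬ memA k d (F ⟨u.2.val, hq⟩) v.2.val := by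
  constructor
  · rintro (⟨h1,h2,_⟩|⟨h1,h2,_⟩|⟨h1,h2,_⟩|⟨h1,h2,h⟩|⟨h1,h2,_⟩|⟨h1,h2,_⟩)
    · omega
    · omega
    · omega
    · exact h.2
    all_goals omega
  · intro h; exact Or.inr (Or.inr (Or.inr (Or.inl ⟨hu, hv, hq, h⟩)))

lemma Dor_12 {u v : Vt p q} (hu : u.1.val = 1) (hv : v.1.val = 2) (hq : v.2.val < q) :
    Dor p k d q F u v ↔ memB k d (F ⟨v.2.val, hq⟩) u.2.val := by
  constructor
  · rintro (⟨h1,h2,_⟩|⟨h1,h2,_⟩|⟨h1,h2,_⟩|⟨h1,h2,_⟩|⟨h1,h2,h⟩|⟨h1,h2,_⟩)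
    pick_goal 5
    · exact h.2
    all_goals omega
  · intro h; exact Or.inr (Or.inr (Or.inr (Or.inr (Or.inl ⟨hu, hv, hq, h⟩))))

lemma Dor_21 {u v : Vt p q} (hu : u.1.val = 2) (hv : v.1.val = 1) (hq : u.2.val < q) :
    Dor p k d q F u v ↔ ¬ memB k d (F ⟨u.2.val, hq⟩) v.2.val := by
  constructor
  · rintro (⟨h1,h2,_⟩|⟨h1,h2,_⟩|⟨h1,h2,_⟩|⟨h1,h2,_⟩|⟨h1,h2,_⟩|⟨h1,h2,h⟩)
    pick_goal 6
    · exact h.2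
    all_goals omega
  · intro h; exact Or.inr (Or.inr (Or.inr (Or.inr (Or.inr ⟨hu, hv, hq, h⟩))))

lemma snd_lt_q {u : Vt p q} (h : u.1.val = 2) : u.2.val < q := by
  have h2 : u.1 = (2 : Fin 3) := Fin.ext h
  have hm : ![p,p,q] u.1 = q := by rw [h2]; simp
  have := u.2.isLt; omega

lemma snd_lt_p {u : Vt p q} (h : u.1.val = 0 ∨ u.1.val = 1) : u.2.val < p := by
  have hm : ![p,p,q] u.1 = p := by
    rcases h with h | h
    · have h2 : u.1 = (0 : Fin 3) := Fin.ext h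
      rw [h2]; simp
    · have h2 : u.1 = (1 : Fin 3) := Fin.ext h
      rw [h2]; simp
  have := u.2.isLt; omega

lemma isOrientation_Dor : IsOrientation (Ktri p p q) (Dor p k d q F) := by
  constructor
  · intro u v hD
    rw [Ktri_adj]
    intro h
    have hval : u.1.val = v.1.val := congrArg Fin.val h
    exact Dor_not_same hval hD
  · intro u v hadj
    rw [Ktri_adj] at hadj
    have hval : u.1.val ≠ v.1.val := fun h => hadj (Fin.ext h)
    have hu3 := u.1.isLt
    have hv3 := v.1.isLt
    interval_cases hiu : u.1.val <;> interval_cases hiv : v.1.val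
    · omega
    · rw [Dor_01 hiu hiv, Dor_10 hiv hiu, not_ne_iff]; exact eq_comm
    · have hq : v.2.val < q := snd_lt_q hiv
      rw [Dor_02 hiu hiv hq, Dor_20 hiv hiu hq]; exact not_not.symm
    · rw [Dor_10 hiu hiv, Dor_01 hiv hiu, ne_comm]
    · omega
    · have hq : v.2.val < q := snd_lt_q hiv
      rw [Dor_12 hiu hiv hq, Dor_21 hiv hiu hq]; exact not_not.symm
    · have hq : u.2.val < q := snd_lt_q hiu
      rw [Dor_20 hiu hiv hq, Dor_02 hiv hiu hq]
    · have hq : u.2.val < q := snd_lt_q hiu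
      rw [Dor_21 hiu hiv hq, Dor_12 hiv hiu hq]
    · omega


section Main
variable {p : ℕ} {k d q : ℕ} (G : GoodFam k d q)

lemma DAB {a b : ℕ} (ha : a < p) (hb : b < p) (h : a / k = b / k) :
    Dor p k d q G.F (mkA p q a ha) (mkB p q b hb) := Or.inl ⟨rfl, rfl, h⟩

lemma DBA {b a : ℕ} (hb : b < p) (ha : a < p) (h : b / k ≠ a / k) :
    Dor p k d q G.F (mkB p q b hb) (mkA p q a ha) := Or.inr (Or.inl ⟨rfl, rfl, h⟩)

lemma DAC {a : ℕ} (ha : a < p) {c : Fin q} (h : memA k d (G.F c) a) :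
    Dor p k d q G.F (mkA p q a ha) (mkC p c) :=
  Or.inr (Or.inr (Or.inl ⟨rfl, rfl, c.isLt, h⟩))

lemma DCA {a : ℕ} (ha : a < p) {c : Fin q} (h : ¬ memA k d (G.F c) a) :
    Dor p k d q G.F (mkC p c) (mkA p q a ha) :=
  Or.inr (Or.inr (Or.inr (Or.inl ⟨rfl, rfl, c.isLt, h⟩)))

lemma DBC {b : ℕ} (hb : b < p) {c : Fin q} (h : memB k d (G.F c) b) :
    Dor p k d q G.F (mkB p q b hb) (mkC p c) :=
  Or.inr (Or.inr (Or.inr (Or.inr (Or.inl ⟨rfl, rfl, c.isLt, h⟩))))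

lemma DCB {b : ℕ} (hb : b < p) {c : Fin q} (h : ¬ memB k d (G.F c) b) :
    Dor p k d q G.F (mkC p c) (mkB p q b hb) :=
  Or.inr (Or.inr (Or.inr (Or.inr (Or.inr ⟨rfl, rfl, c.isLt, h⟩))))

lemma two_step (hp : p = k*d) (hk : 1 < k) (hd : 1 < d) :
    ∀ u v : Vt p q, u = v ∨ Dor p k d q G.F u v ∨
      ∃ w, Dor p k d q G.F u w ∧ Dor p k d q G.F w v := by
  subst hp
  have hk0 : 0 < k := by omega
  intro u v
  obtain ⟨iu, xu⟩ := u
  obtain ⟨iv, xv⟩ := v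
  have hiu3 := iu.isLt
  have hiv3 := iv.isLt
  have hucase : iu.val = 0 ∨ iu.val = 1 ∨ iu.val = 2 := by omega
  have hvcase : iv.val = 0 ∨ iv.val = 1 ∨ iv.val = 2 := by omega
  rcases hucase with hu | hu | hu <;> rcases hvcase with hv | hv | hv
  -- (0,0)
  · have e1 : iu = (0 : Fin 3) := Fin.ext hu
    have e2 : iv = (0 : Fin 3) := Fin.ext hv
    subst e1; subst e2
    have ha : xu.val < k*d := by simpa using xu.isLt
    have ha' : xv.val < k*d := by simpa using xv.isLt
    by_cases hae : xu.val = xv.val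
    · exact Or.inl (congrArg (Sigma.mk (0 : Fin 3)) (Fin.ext hae))
    · right; right
      by_cases hblk : xu.val / k = xv.val / k
      · obtain ⟨c, h1, h2⟩ := P7A hk hd G ha ha' hae hblk
        exact ⟨mkC _ c, DAC G ha h1, DCA G ha' h2⟩
      · have hb : (xu.val / k) * k < k*d :=
          lt_of_le_of_lt (Nat.div_mul_le_self xu.val k) ha
        have hcan : (xu.val / k) * k / k = xu.val / k := Nat.mul_div_cancel _ hk0
        exact ⟨mkB _ _ _ hb, DAB G ha hb hcan.symm, DBA G hb ha' (by rw [hcan]; exact hblk)⟩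
  -- (0,1)
  · have e1 : iu = (0 : Fin 3) := Fin.ext hu
    have e2 : iv = (1 : Fin 3) := Fin.ext hv
    subst e1; subst e2
    have ha : xu.val < k*d := by simpa using xu.isLt
    have hb : xv.val < k*d := by simpa using xv.isLt
    by_cases hblk : xu.val / k = xv.val / k
    · exact Or.inr (Or.inl (DAB G ha hb hblk))
    · right; right
      obtain ⟨cA, hcA⟩ := G.hA
      refine ⟨mkC _ cA, DAC G ha ?_, DCB G hb ?_⟩
      · rw [hcA]; exact memA_gA hk hd ha
      · rw [hcA]; exact memB_gA_false hk xv.val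
  -- (0,2)
  · have e1 : iu = (0 : Fin 3) := Fin.ext hu
    have e2 : iv = (2 : Fin 3) := Fin.ext hv
    subst e1; subst e2
    have ha : xu.val < k*d := by simpa using xu.isLt
    set c' : Fin q := ⟨xv.val, by simpa using xv.isLt⟩ with hc'
    by_cases hm : memA k d (G.F c') xu.val
    · exact Or.inr (Or.inl (DAC G ha hm))
    · right; right
      obtain ⟨b, hb, hmb, hdiv⟩ := P3 hk hd G c' ha hm
      exact ⟨mkB _ _ b hb, DAB G ha hb hdiv.symm, DBC G hb hmb⟩
  -- (1,0)
  · have e1 : iu = (1 : Fin 3) := Fin.ext hu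
    have e2 : iv = (0 : Fin 3) := Fin.ext hv
    subst e1; subst e2
    have hb : xu.val < k*d := by simpa using xu.isLt
    have ha : xv.val < k*d := by simpa using xv.isLt
    by_cases hblk : xu.val / k = xv.val / k
    · right; right
      obtain ⟨cB, hcB⟩ := G.hB
      refine ⟨mkC _ cB, DBC G hb ?_, DCA G ha ?_⟩
      · rw [hcB]; exact memB_gB hk hd hb
      · rw [hcB]; exact memA_gB_false hk hd ha
    · exact Or.inr (Or.inl (DBA G hb ha hblk))
  -- (1,1)
  · have e1 : iu = (1 : Fin 3) := Fin.ext hu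
    have e2 : iv = (1 : Fin 3) := Fin.ext hv
    subst e1; subst e2
    have hb : xu.val < k*d := by simpa using xu.isLt
    have hb' : xv.val < k*d := by simpa using xv.isLt
    by_cases hae : xu.val = xv.val
    · exact Or.inl (congrArg (Sigma.mk (1 : Fin 3)) (Fin.ext hae))
    · right; right
      by_cases hblk : xu.val / k = xv.val / k
      · obtain ⟨c, h1, h2⟩ := P7B hk hd G hb hb' hae hblk
        exact ⟨mkC _ c, DBC G hb h1, DCB G hb' h2⟩
      · have ha : (xv.val / k) * k < k*d :=
          lt_of_le_of_lt (Nat.div_mul_le_self xv.val k) hb'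
        have hcan : (xv.val / k) * k / k = xv.val / k := Nat.mul_div_cancel _ hk0
        refine ⟨mkA _ _ _ ha, DBA G hb ha ?_, DAB G ha hb' hcan⟩
        rw [hcan]; exact hblk
  -- (1,2)
  · have e1 : iu = (1 : Fin 3) := Fin.ext hu
    have e2 : iv = (2 : Fin 3) := Fin.ext hv
    subst e1; subst e2
    have hb : xu.val < k*d := by simpa using xu.isLt
    set c' : Fin q := ⟨xv.val, by simpa using xv.isLt⟩ with hc'
    by_cases hm : memB k d (G.F c') xu.val
    · exact Or.inr (Or.inl (DBC G hb hm))
    · right; right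
      obtain ⟨a, ha, hma, hne⟩ := P5 hk hd G c' hb hm
      exact ⟨mkA _ _ a ha, DBA G hb ha (Ne.symm hne), DAC G ha hma⟩
  -- (2,0)
  · have e1 : iu = (2 : Fin 3) := Fin.ext hu
    have e2 : iv = (0 : Fin 3) := Fin.ext hv
    subst e1; subst e2
    set c : Fin q := ⟨xu.val, by simpa using xu.isLt⟩ with hc
    have ha : xv.val < k*d := by simpa using xv.isLt
    by_cases hm : memA k d (G.F c) xv.val
    · right; right
      obtain ⟨b, hb, hnb, hne⟩ := P4 hk hd G c ha hm
      exact ⟨mkB _ _ b hb, DCB G hb hnb, DBA G hb ha hne⟩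
    · exact Or.inr (Or.inl (DCA G ha hm))
  -- (2,1)
  · have e1 : iu = (2 : Fin 3) := Fin.ext hu
    have e2 : iv = (1 : Fin 3) := Fin.ext hv
    subst e1; subst e2
    set c : Fin q := ⟨xu.val, by simpa using xu.isLt⟩ with hc
    have hb : xv.val < k*d := by simpa using xv.isLt
    by_cases hm : memB k d (G.F c) xv.val
    · right; right
      obtain ⟨a, ha, hna, heq⟩ := P6 hk hd G c hb hm
      exact ⟨mkA _ _ a ha, DCA G ha hna, DAB G ha hb heq⟩
    · exact Or.inr (Or.inl (DCB G hb hm))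
  -- (2,2)
  · have e1 : iu = (2 : Fin 3) := Fin.ext hu
    have e2 : iv = (2 : Fin 3) := Fin.ext hv
    subst e1; subst e2
    set c : Fin q := ⟨xu.val, by simpa using xu.isLt⟩ with hc
    set c' : Fin q := ⟨xv.val, by simpa using xv.isLt⟩ with hc'
    by_cases hae : xu.val = xv.val
    · exact Or.inl (congrArg (Sigma.mk (2 : Fin 3)) (Fin.ext hae))
    · right; right
      have hcc : c ≠ c' := fun h => hae (congrArg Fin.val h)
      obtain ⟨i, x, hx', hxn⟩ := P2 hk hd G hcc
      by_cases hi : i.val < d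
      · have ha : i.val * k + x.val < k*d := glue_lt hi x.isLt
        have hmem' : memA k d (G.F c') (i.val * k + x.val) := by
          unfold memA gApp
          rw [glue_div x.isLt, glue_mod x.isLt]
          exact ⟨by omega, x.isLt, hx'⟩
        have hnmem : ¬ memA k d (G.F c) (i.val * k + x.val) := by
          unfold memA gApp
          rw [glue_div x.isLt, glue_mod x.isLt]
          rintro ⟨_, hxx, hm⟩
          exact hxn hm
        exact ⟨mkA _ _ _ ha, DCA G ha hnmem, DAC G ha hmem'⟩
      · have hid : i.val - d < d := by omega
        have hb : (i.val - d) * k + x.val < k*d := glue_lt hid x.isLt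
        have hmem' : memB k d (G.F c') ((i.val - d) * k + x.val) := by
          unfold memB gApp
          rw [glue_div x.isLt, glue_mod x.isLt, (show d + (i.val - d) = i.val by omega)]
          exact ⟨i.isLt, x.isLt, hx'⟩
        have hnmem : ¬ memB k d (G.F c) ((i.val - d) * k + x.val) := by
          unfold memB gApp
          rw [glue_div x.isLt, glue_mod x.isLt, (show d + (i.val - d) = i.val by omega)]
          rintro ⟨_, hxx, hm⟩
          exact hxn hm
        exact ⟨mkB _ _ _ hb, DCB G hb hnmem, DBC G hb hmem'⟩

end Main

lemma ddist_le_of_hasPath {V : Type*} {D : V → V → Prop} {u v : V} {m : ℕ}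
    (h : hasPath D u v m) : ddist D u v ≤ (m : ℕ∞) :=
  sInf_le ⟨m, h, rfl⟩

lemma two_le_ddist {V : Type*} {D : V → V → Prop} {u v : V}
    (hne : u ≠ v) (hnd : ¬ D u v) : 2 ≤ ddist D u v := by
  apply le_sInf
  rintro n ⟨m, hpth, rfl⟩
  match m, hpth with
  | 0, h => exact absurd h hne
  | 1, ⟨w, hw, hwv⟩ =>
    have hv : w = v := hwv
    exact absurd (hv ▸ hw) hnd
  | (m+2), _ => exact_mod_cast Nat.le_add_left 2 m

lemma ddist_le_ddiam {V : Type*} {D : V → V → Prop} (u v : V) :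
    ddist D u v ≤ ddiam V D :=
  le_trans (le_iSup (fun v' => ddist D u v') v) (le_iSup (fun u' => ⨆ v', ddist D u' v') u)

section Final
variable {p k d q : ℕ}

theorem main_result (hp4 : 4 ≤ p) (hp : p = k * d) (hk : 1 < k) (hd : 1 < d)
    (G : GoodFam k d q) :
    (∃ D, IsOrientation (Ktri p p q) D ∧ IsStrong D ∧ ddiam _ D = 2) ∧
      orientationNumber (Ktri p p q) = 2 := by
  set D : Vt p q → Vt p q → Prop := Dor p k d q G.F with hD
  have hts := two_step G hp hk hd
  have hstrong : IsStrong D := by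
    intro u v
    rcases hts u v with h | h | ⟨w, h1, h2⟩
    · exact ⟨0, h⟩
    · exact ⟨1, v, h, rfl⟩
    · exact ⟨2, w, h1, v, h2, rfl⟩
  have hor : IsOrientation (Ktri p p q) D := isOrientation_Dor
  -- two special vertices in part A
  have h0p : 0 < p := by omega
  have h1p : 1 < p := by omega
  set u0 : Vt p q := mkA p q 0 h0p with hu0
  set u1 : Vt p q := mkA p q 1 h1p with hu1
  have hne01 : u0 ≠ u1 := by
    intro h
    have h01 : (0:ℕ) = 1 := congrArg (fun w : Vt p q => w.2.val) h
    omega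
  have hnd01 : ¬ D u0 u1 := Dor_not_same rfl
  have hdiam : ddiam (Vt p q) D = 2 := by
    apply le_antisymm
    · apply iSup_le
      intro u
      apply iSup_le
      intro v
      rcases hts u v with h | h | ⟨w, h1, h2⟩
      · exact le_trans (ddist_le_of_hasPath (m := 0) h) (by norm_num)
      · exact le_trans (ddist_le_of_hasPath (m := 1) ⟨v, h, rfl⟩) (by norm_num)
      · exact le_trans (ddist_le_of_hasPath (m := 2) ⟨w, h1, v, h2, rfl⟩) (by norm_num)
    · exact le_trans (two_le_ddist hne01 hnd01) (ddist_le_ddiam u0 u1)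
  refine ⟨⟨D, hor, hstrong, hdiam⟩, ?_⟩
  apply le_antisymm
  · exact sInf_le ⟨D, hor, hstrong, hdiam⟩
  · apply le_sInf
    rintro n ⟨D', hor', hstr', rfl⟩
    have hnd' : ¬ D' u0 u1 := by
      intro h
      have hadj := hor'.1 _ _ h
      have hadj := (Ktri_adj (a := p) (b := p) (c := q)).1 hadj
      exact hadj rfl
    exact le_trans (two_le_ddist hne01 hnd') (ddist_le_ddiam u0 u1)

end Final
end Kppq

/-- For `p = kd ≥ 4` with `1 < k, d < p` and `2k+2 ≤ q ≤ Φ*(p,d)+2`, `K(p,p,q)` has a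
strong orientation of diameter 2, so its orientation number is 2. -/
theorem Kppq_orientation_number (p k d q : ℕ) (hp4 : 4 ≤ p) (hp : p = k * d)
    (hk : 1 < k) (hkp : k < p) (hd : 1 < d) (hdp : d < p)
    (hq1 : 2 * k + 2 ≤ q) (hq2 : q ≤ PhiStar k d p + 2) :
    (∃ D, IsOrientation (Ktri p p q) D ∧ IsStrong D ∧ ddiam _ D = 2) ∧
      orientationNumber (Ktri p p q) = 2 := by
  have hq2' : q ≤ PhiStar k d (k*d) + 2 := by rw [← hp]; exact hq2
  obtain ⟨G⟩ := Kppq.exists_goodFam hk hd hq1 hq2'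
  exact Kppq.main_result hp4 hp hk hd G
end

section
/- Let n ≥ 2, let p_1,...,p_n be positive integers, and suppose there is an index r with p_1 + ... + p_r = p_{r+1} + ... + p_n = p ≥ 4. If p is even and p+2 ≤ q ≤ Φ_even(p)+2, or p is odd and p+3 ≤ q ≤ Φ_odd(p)+2, then the complete multipartite graph K(p_1,...,p_n,q) has orientation number 2. -/
open Finset

section Aux
open Sum Polynomial

lemma hasPath_zero {V : Type*} (D : V → V → Prop) (u : V) : hasPath D u u 0 := rfl

lemma hasPath_one {V : Type*} {D : V → V → Prop} {u v : V} (h : D u v) : hasPath D u v 1 :=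
  ⟨v, h, rfl⟩

lemma hasPath_two {V : Type*} {D : V → V → Prop} {u v w : V} (h1 : D u w) (h2 : D w v) :
    hasPath D u v 2 := ⟨w, h1, hasPath_one h2⟩

lemma ddist_le_of_hasPath {V : Type*} {D : V → V → Prop} {u v : V} {m : ℕ}
    (h : hasPath D u v m) : ddist D u v ≤ m :=
  sInf_le ⟨m, h, rfl⟩

lemma two_le_ddist {V : Type*} {G : SimpleGraph V} {D : V → V → Prop}
    (hD : IsOrientation G D) {u v : V} (huv : u ≠ v) (hna : ¬ G.Adj u v) :
    2 ≤ ddist D u v := by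
  refine le_sInf ?_
  rintro n ⟨m, hm, rfl⟩
  match m, hm with
  | 0, hm => exact absurd hm huv
  | 1, ⟨w, hw, hw'⟩ => exact absurd (hw' ▸ hD.1 u w hw) hna
  | (k+2), hm => exact_mod_cast by exact_mod_cast Nat.le_add_left 2 k

lemma orientationNumber_eq_two {V : Type*} {G : SimpleGraph V}
    (D : V → V → Prop) (hD : IsOrientation G D)
    (hP : ∀ u v : V, u ≠ v → D u v ∨ ∃ w, D u w ∧ D w v)
    (x y : V) (hxy : x ≠ y) (hna : ¬ G.Adj x y) :
    orientationNumber G = 2 := by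
  have hdist : ∀ u v : V, ddist D u v ≤ 2 := by
    intro u v
    rcases eq_or_ne u v with rfl | huv
    · exact le_trans (ddist_le_of_hasPath (hasPath_zero D u)) (by norm_num)
    · rcases hP u v huv with h | ⟨w, h1, h2⟩
      · exact le_trans (ddist_le_of_hasPath (hasPath_one h)) (by norm_num)
      · exact le_trans (ddist_le_of_hasPath (hasPath_two h1 h2)) (by norm_num)
  have hdiam_le : ddiam V D ≤ 2 := by
    refine iSup_le fun u => iSup_le fun v => hdist u v
  have hdiam_ge : 2 ≤ ddiam V D :=
    le_trans (two_le_ddist hD hxy hna) (le_iSup_of_le x (le_iSup_of_le y le_rfl))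
  have hstrong : IsStrong D := by
    intro u v
    rcases eq_or_ne u v with rfl | huv
    · exact ⟨0, hasPath_zero D u⟩
    · rcases hP u v huv with h | ⟨w, h1, h2⟩
      · exact ⟨1, hasPath_one h⟩
      · exact ⟨2, hasPath_two h1 h2⟩
  refine le_antisymm (sInf_le ⟨D, hD, hstrong, le_antisymm hdiam_le hdiam_ge⟩) ?_
  refine le_sInf ?_
  rintro n ⟨D', hD', _, rfl⟩
  exact le_trans (two_le_ddist hD' hxy hna) (le_iSup_of_le x (le_iSup_of_le y le_rfl))

open Finset Sum

section Core

variable {t1 t2 q : ℕ}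

abbrev Uty (t1 t2 : ℕ) := (Fin t1 ⊕ Fin t2) ⊕ (Fin t2 ⊕ Fin t1)

abbrev Wty (t1 t2 q : ℕ) := Uty t1 t2 ⊕ Fin q

def Dg (F : Fin q → Finset (Uty t1 t2)) : Wty t1 t2 q → Wty t1 t2 q → Prop
  | inl (inl a), inl (inr b) => a.isLeft = b.isLeft
  | inl (inr b), inl (inl a) => ¬ a.isLeft = b.isLeft
  | inl (inl _), inl (inl _) => False
  | inl (inr _), inl (inr _) => False
  | inl u, inr c => u ∉ F c
  | inr c, inl u => u ∈ F c
  | inr _, inr _ => False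

def IsGood (T : Finset (Uty t1 t2)) : Prop :=
  (∃ a, inl (inl a) ∈ T) ∧ (∃ a, inl (inl a) ∉ T) ∧
  (∃ a, inl (inr a) ∈ T) ∧ (∃ a, inl (inr a) ∉ T) ∧
  (∃ b, inr (inl b) ∈ T) ∧ (∃ b, inr (inl b) ∉ T) ∧
  (∃ b, inr (inr b) ∈ T) ∧ (∃ b, inr (inr b) ∉ T)

def Afull (t1 t2 : ℕ) : Finset (Uty t1 t2) := univ.filter (fun u => u.isLeft)
def Bfull (t1 t2 : ℕ) : Finset (Uty t1 t2) := univ.filter (fun u => ¬ u.isLeft)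

@[simp] lemma mem_Afull (u : Uty t1 t2) : u ∈ Afull t1 t2 ↔ u.isLeft := by
  simp [Afull]
@[simp] lemma mem_Bfull (u : Uty t1 t2) : u ∈ Bfull t1 t2 ↔ ¬ u.isLeft := by
  simp [Bfull]

variable (F : Fin q → Finset (Uty t1 t2))

structure FamOK : Prop where
  hdiff : ∀ c c', c ≠ c' → ∃ u, u ∈ F c ∧ u ∉ F c'
  hgood : ∀ c, F c = Afull t1 t2 ∨ F c = Bfull t1 t2 ∨ IsGood (F c)
  hA : ∃ c, F c = Afull t1 t2
  hB : ∃ c, F c = Bfull t1 t2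
  hsepA1 : ∀ x y : Fin t1, x ≠ y → ∃ c, inl (inl x) ∉ F c ∧ inl (inl y) ∈ F c
  hsepA2 : ∀ x y : Fin t2, x ≠ y → ∃ c, inl (inr x) ∉ F c ∧ inl (inr y) ∈ F c
  hsepB1 : ∀ x y : Fin t2, x ≠ y → ∃ c, inr (inl x) ∉ F c ∧ inr (inl y) ∈ F c
  hsepB2 : ∀ x y : Fin t1, x ≠ y → ∃ c, inr (inr x) ∉ F c ∧ inr (inr y) ∈ F c

theorem famOK_path (hF : FamOK F) (ht1 : 1 ≤ t1) (ht2 : 1 ≤ t2) :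
    ∀ x y : Wty t1 t2 q, x ≠ y → Dg F x y ∨ ∃ z, Dg F x z ∧ Dg F z y := by
  set e1 : Fin t1 := ⟨0, ht1⟩ with he1
  set e2 : Fin t2 := ⟨0, ht2⟩ with he2
  rintro (((a | a) | (b | b)) | c) (((a' | a') | (b' | b')) | c') hne
  -- A1 A1
  · obtain ⟨c, h1, h2⟩ := hF.hsepA1 a a' (by simpa using hne)
    exact Or.inr ⟨inr c, h1, h2⟩
  -- A1 A2
  · exact Or.inr ⟨inl (inr (inl e2)), by simp [Dg], by simp [Dg]⟩
  -- A1 B1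
  · exact Or.inl (by simp [Dg])
  -- A1 B2
  · obtain ⟨c, hc⟩ := hF.hB
    exact Or.inr ⟨inr c, by simp [Dg, hc], by simp [Dg, hc]⟩
  -- A1 C
  · by_cases h : inl (inl a) ∈ F c'
    · rcases hF.hgood c' with hc | hc | hc
      · exact Or.inr ⟨inl (inr (inl e2)), by simp [Dg], by simp [Dg, hc]⟩
      · rw [hc] at h; simp at h
      · obtain ⟨b, hb⟩ := hc.2.2.2.2.2.1
        exact Or.inr ⟨inl (inr (inl b)), by simp [Dg], by simp [Dg, hb]⟩
    · exact Or.inl (by simpa [Dg] using h)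
  -- A2 A1
  · exact Or.inr ⟨inl (inr (inr e1)), by simp [Dg], by simp [Dg]⟩
  -- A2 A2
  · obtain ⟨c, h1, h2⟩ := hF.hsepA2 a a' (by simpa using hne)
    exact Or.inr ⟨inr c, h1, h2⟩
  -- A2 B1
  · obtain ⟨c, hc⟩ := hF.hB
    exact Or.inr ⟨inr c, by simp [Dg, hc], by simp [Dg, hc]⟩
  -- A2 B2
  · exact Or.inl (by simp [Dg])
  -- A2 C
  · by_cases h : inl (inr a) ∈ F c'
    · rcases hF.hgood c' with hc | hc | hc
      · exact Or.inr ⟨inl (inr (inr e1)), by simp [Dg], by simp [Dg, hc]⟩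
      · rw [hc] at h; simp at h
      · obtain ⟨b, hb⟩ := hc.2.2.2.2.2.2.2
        exact Or.inr ⟨inl (inr (inr b)), by simp [Dg], by simp [Dg, hb]⟩
    · exact Or.inl (by simpa [Dg] using h)
  -- B1 A1
  · obtain ⟨c, hc⟩ := hF.hA
    exact Or.inr ⟨inr c, by simp [Dg, hc], by simp [Dg, hc]⟩
  -- B1 A2
  · exact Or.inl (by simp [Dg])
  -- B1 B1
  · obtain ⟨c, h1, h2⟩ := hF.hsepB1 b b' (by simpa using hne)
    exact Or.inr ⟨inr c, h1, h2⟩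
  -- B1 B2
  · exact Or.inr ⟨inl (inl (inr e2)), by simp [Dg], by simp [Dg]⟩
  -- B1 C
  · by_cases h : inr (inl b) ∈ F c'
    · rcases hF.hgood c' with hc | hc | hc
      · rw [hc] at h; simp at h
      · exact Or.inr ⟨inl (inl (inr e2)), by simp [Dg], by simp [Dg, hc]⟩
      · obtain ⟨a, ha⟩ := hc.2.2.2.1
        exact Or.inr ⟨inl (inl (inr a)), by simp [Dg], by simp [Dg, ha]⟩
    · exact Or.inl (by simpa [Dg] using h)
  -- B2 A1
  · exact Or.inl (by simp [Dg])
  -- B2 A2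
  · obtain ⟨c, hc⟩ := hF.hA
    exact Or.inr ⟨inr c, by simp [Dg, hc], by simp [Dg, hc]⟩
  -- B2 B1
  · exact Or.inr ⟨inl (inl (inl e1)), by simp [Dg], by simp [Dg]⟩
  -- B2 B2
  · obtain ⟨c, h1, h2⟩ := hF.hsepB2 b b' (by simpa using hne)
    exact Or.inr ⟨inr c, h1, h2⟩
  -- B2 C
  · by_cases h : inr (inr b) ∈ F c'
    · rcases hF.hgood c' with hc | hc | hc
      · rw [hc] at h; simp at h
      · exact Or.inr ⟨inl (inl (inl e1)), by simp [Dg], by simp [Dg, hc]⟩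
      · obtain ⟨a, ha⟩ := hc.2.1
        exact Or.inr ⟨inl (inl (inl a)), by simp [Dg], by simp [Dg, ha]⟩
    · exact Or.inl (by simpa [Dg] using h)
  -- C A1
  · by_cases h : inl (inl a') ∈ F c
    · exact Or.inl (by simpa [Dg] using h)
    · rcases hF.hgood c with hc | hc | hc
      · rw [hc] at h; simp at h
      · exact Or.inr ⟨inl (inr (inr e1)), by simp [Dg, hc], by simp [Dg]⟩
      · obtain ⟨b, hb⟩ := hc.2.2.2.2.2.2.1
        exact Or.inr ⟨inl (inr (inr b)), by simp [Dg, hb], by simp [Dg]⟩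
  -- C A2
  · by_cases h : inl (inr a') ∈ F c
    · exact Or.inl (by simpa [Dg] using h)
    · rcases hF.hgood c with hc | hc | hc
      · rw [hc] at h; simp at h
      · exact Or.inr ⟨inl (inr (inl e2)), by simp [Dg, hc], by simp [Dg]⟩
      · obtain ⟨b, hb⟩ := hc.2.2.2.2.1
        exact Or.inr ⟨inl (inr (inl b)), by simp [Dg, hb], by simp [Dg]⟩
  -- C B1
  · by_cases h : inr (inl b') ∈ F c
    · exact Or.inl (by simpa [Dg] using h)
    · rcases hF.hgood c with hc | hc | hc
      · exact Or.inr ⟨inl (inl (inl e1)), by simp [Dg, hc], by simp [Dg]⟩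
      · rw [hc] at h; simp at h
      · obtain ⟨a, ha⟩ := hc.1
        exact Or.inr ⟨inl (inl (inl a)), by simp [Dg, ha], by simp [Dg]⟩
  -- C B2
  · by_cases h : inr (inr b') ∈ F c
    · exact Or.inl (by simpa [Dg] using h)
    · rcases hF.hgood c with hc | hc | hc
      · exact Or.inr ⟨inl (inl (inr e2)), by simp [Dg, hc], by simp [Dg]⟩
      · rw [hc] at h; simp at h
      · obtain ⟨a, ha⟩ := hc.2.2.1
        exact Or.inr ⟨inl (inl (inr a)), by simp [Dg, ha], by simp [Dg]⟩
  -- C C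
  · obtain ⟨u, h1, h2⟩ := hF.hdiff c c' (by simpa using hne)
    refine Or.inr ⟨inl u, ?_, ?_⟩
    · rcases u with (u | u) | (u | u) <;> simpa [Dg] using h1
    · rcases u with (u | u) | (u | u) <;> simpa [Dg] using h2

end Core

section Orient
variable {t1 t2 q : ℕ} (F : Fin q → Finset (Uty t1 t2))

/-- side classification -/
def sdW : Wty t1 t2 q → Fin 3
  | inl (inl _) => 0
  | inl (inr _) => 1
  | inr _ => 2

lemma Dg_sd_ne : ∀ x y : Wty t1 t2 q, Dg F x y → sdW x ≠ sdW y := by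
  rintro (((a | a) | (b | b)) | c) (((a' | a') | (b' | b')) | c') h <;>
    simp [Dg, sdW] at h ⊢

lemma Dg_asymm_iff : ∀ x y : Wty t1 t2 q, sdW x ≠ sdW y → (Dg F x y ↔ ¬ Dg F y x) := by
  rintro (((a | a) | (b | b)) | c) (((a' | a') | (b' | b')) | c') h <;>
    simp [Dg, sdW] at h ⊢
end Orient

section Rank
variable {t1 t2 q : ℕ}

def rkW : Wty t1 t2 q → ℕ
  | inl (inl (inl a)) => a
  | inl (inl (inr a)) => t1 + a
  | inl (inr (inl b)) => b
  | inl (inr (inr b)) => t2 + b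
  | inr c => c

lemma rkW_inj : ∀ x y : Wty t1 t2 q, sdW x = sdW y → rkW x = rkW y → x = y := by
  rintro (((a | a) | (b | b)) | c) (((a' | a') | (b' | b')) | c') hs hr <;>
    simp [sdW, rkW] at hs hr ⊢ <;> first
      | (exact Fin.ext hr)
      | omega
end Rank

section Family
variable {t1 t2 : ℕ}

/-- the canonical surjection `Fin t1 → Fin t2` (requires `0 < t2`). -/
def mm (ht2 : 0 < t2) (i : Fin t1) : Fin t2 := ⟨i.val % t2, Nat.mod_lt _ ht2⟩

/-- separator sets -/
def sep (ht2 : 0 < t2) (i : Fin t1) : Finset (Uty t1 t2) :=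
  ((univ.erase i).disjSum {mm ht2 i}).disjSum ((univ.erase (mm ht2 i)).disjSum {i})

@[simp] lemma mem_sep_a1 (ht2 : 0 < t2) (i x : Fin t1) :
    (inl (inl x) : Uty t1 t2) ∈ sep ht2 i ↔ x ≠ i := by simp [sep]
@[simp] lemma mem_sep_a2 (ht2 : 0 < t2) (i : Fin t1) (x : Fin t2) :
    (inl (inr x) : Uty t1 t2) ∈ sep ht2 i ↔ x = mm ht2 i := by simp [sep]
@[simp] lemma mem_sep_b1 (ht2 : 0 < t2) (i : Fin t1) (x : Fin t2) :
    (inr (inl x) : Uty t1 t2) ∈ sep ht2 i ↔ x ≠ mm ht2 i := by simp [sep]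
@[simp] lemma mem_sep_b2 (ht2 : 0 < t2) (i x : Fin t1) :
    (inr (inr x) : Uty t1 t2) ∈ sep ht2 i ↔ x = i := by simp [sep]

lemma card_sep (ht1 : 0 < t1) (ht2 : 0 < t2) (i : Fin t1) :
    (sep ht2 i).card = t1 + t2 := by
  have h1 : (univ.erase i).card = t1 - 1 := by
    rw [Finset.card_erase_of_mem (mem_univ _)]; simp
  have h2 : (univ.erase (mm ht2 i)).card = t2 - 1 := by
    rw [Finset.card_erase_of_mem (mem_univ _)]; simp
  simp [sep, Finset.card_disjSum, h1, h2]
  omega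

lemma isGood_sep (ht1 : 2 ≤ t1) (ht2 : 2 ≤ t2) (i : Fin t1) :
    IsGood (sep (by omega : 0 < t2) i) := by
  have ht2' : 0 < t2 := by omega
  have : Nontrivial (Fin t1) := Fin.nontrivial_iff_two_le.mpr ht1
  have : Nontrivial (Fin t2) := Fin.nontrivial_iff_two_le.mpr ht2
  obtain ⟨x1, hx1⟩ := exists_ne i
  obtain ⟨x2, hx2⟩ := exists_ne (mm ht2' i)
  exact ⟨⟨x1, by simp [hx1]⟩, ⟨i, by simp⟩, ⟨mm ht2' i, by simp⟩, ⟨x2, by simp [hx2]⟩,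
    ⟨x2, by simp [hx2]⟩, ⟨mm ht2' i, by simp⟩, ⟨i, by simp⟩, ⟨x1, by simp [hx1]⟩⟩

lemma sep_injective (ht2 : 0 < t2) : Function.Injective (sep (t1 := t1) ht2) := by
  intro i j h
  have := (mem_sep_b2 ht2 j i).mp (h ▸ (mem_sep_b2 ht2 i i).mpr rfl)
  exact this

/-- all good sets of size `t1 + t2` -/
noncomputable def Goodset (t1 t2 : ℕ) : Finset (Finset (Uty t1 t2)) :=
  letI := Classical.decPred (fun T : Finset (Uty t1 t2) => T.card = t1 + t2 ∧ IsGood T)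
  univ.filter (fun T => T.card = t1 + t2 ∧ IsGood T)

lemma mem_Goodset {T : Finset (Uty t1 t2)} :
    T ∈ Goodset t1 t2 ↔ T.card = t1 + t2 ∧ IsGood T := by
  classical
  simp [Goodset]

theorem exists_famOK {q : ℕ} (ht1 : 2 ≤ t1) (ht2 : 2 ≤ t2) (ht12 : t2 ≤ t1)
    (hql : t1 + t2 + 2 ≤ q) (hqu : q ≤ (Goodset t1 t2).card + 2) :
    ∃ F : Fin q → Finset (Uty t1 t2), FamOK F := by
  classical
  have ht2' : 0 < t2 := by omega
  set SepS : Finset (Finset (Uty t1 t2)) := univ.image (sep (t1 := t1) ht2') with hSepS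
  have hsub : SepS ⊆ Goodset t1 t2 := by
    intro S hS
    simp only [hSepS, mem_image, mem_univ, true_and] at hS
    obtain ⟨i, rfl⟩ := hS
    exact mem_Goodset.mpr ⟨card_sep (by omega) ht2' i, isGood_sep ht1 ht2 i⟩
  have hScard : SepS.card = t1 := by
    rw [hSepS, Finset.card_image_of_injective _ (sep_injective ht2'), card_univ,
      Fintype.card_fin]
  obtain ⟨X, hSX, hXG, hXcard⟩ :=
    Finset.exists_subsuperset_card_eq hsub (n := q - 2) (by rw [hScard]; omega) (by omega)
  have e : ↥X ≃ Fin (q - 2) := X.equivFin.trans (finCongr hXcard)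
  set F : Fin q → Finset (Uty t1 t2) := fun c =>
    if c.val = 0 then Afull t1 t2 else if c.val = 1 then Bfull t1 t2
    else (e.symm ⟨c.val - 2, by have := c.isLt; omega⟩ : X).val with hFdef
  have hq6 : 6 ≤ q := by omega
  -- F of generic index
  have hgen : ∀ c : Fin q, 2 ≤ c.val → F c ∈ X := by
    intro c hc
    simp only [hFdef]
    rw [if_neg (by omega), if_neg (by omega)]
    exact (e.symm _).2
  have hmemX : ∀ S ∈ X, ∃ c : Fin q, F c = S := by
    intro S hS
    refine ⟨⟨(e ⟨S, hS⟩).val + 2, by have := (e ⟨S, hS⟩).isLt; omega⟩, ?_⟩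
    simp only [hFdef]
    rw [if_neg (by omega), if_neg (by omega)]
    have : (⟨(e ⟨S, hS⟩).val + 2 - 2, by have := (e ⟨S, hS⟩).isLt; omega⟩ : Fin (q - 2))
        = e ⟨S, hS⟩ := by ext; simp
    rw [this, Equiv.symm_apply_apply]
  have hFA : F ⟨0, by omega⟩ = Afull t1 t2 := by simp [hFdef]
  have hFB : F ⟨1, by omega⟩ = Bfull t1 t2 := by simp [hFdef]
  have hgood : ∀ c, F c = Afull t1 t2 ∨ F c = Bfull t1 t2 ∨ IsGood (F c) := by
    intro c
    rcases Nat.lt_or_ge c.val 2 with hc | hc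
    · interval_cases h : c.val
      · left; simp [hFdef, h]
      · right; left; simp [hFdef, h]
    · exact Or.inr (Or.inr (mem_Goodset.mp (hXG (hgen c hc))).2)
  have hcardgen : ∀ c, 2 ≤ c.val → (F c).card = t1 + t2 :=
    fun c hc => (mem_Goodset.mp (hXG (hgen c hc))).1
  have hGoodF : ∀ c, 2 ≤ c.val → IsGood (F c) :=
    fun c hc => (mem_Goodset.mp (hXG (hgen c hc))).2
  have hinj : ∀ c c', 2 ≤ c.val → 2 ≤ c'.val → c ≠ c' → F c ≠ F c' := by
    intro c c' hc hc' hne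
    simp only [hFdef]
    rw [if_neg (by omega), if_neg (by omega), if_neg (by omega), if_neg (by omega)]
    intro h
    have h2 := Subtype.ext h
    have := e.symm.injective h2
    apply hne
    have : c.val - 2 = c'.val - 2 := congrArg Fin.val this
    exact Fin.ext (by omega)
  refine ⟨F, ?_, hgood, ⟨_, hFA⟩, ⟨_, hFB⟩, ?_, ?_, ?_, ?_⟩
  -- hdiff
  · intro c c' hne
    have key : ∀ d : Fin q, 2 ≤ d.val → IsGood (F d) := hGoodF
    rcases Nat.lt_or_ge c.val 2 with hc | hc <;> rcases Nat.lt_or_ge c'.val 2 with hc' | hc'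
    · -- both special
      have hcc' : c.val ≠ c'.val := fun h => hne (Fin.ext h)
      interval_cases h : c.val <;> interval_cases h' : c'.val
      · omega
      · exact ⟨inl (inl ⟨0, by omega⟩), by simp [hFdef, h, h']⟩
      · exact ⟨inr (inl ⟨0, by omega⟩), by simp [hFdef, h, h']⟩
      · omega
    · -- c special, c' generic
      have hG := hGoodF c' hc'
      interval_cases h : c.val
      · obtain ⟨x, hx⟩ := hG.2.1
        exact ⟨inl (inl x), by simp [hFdef, h], hx⟩
      · obtain ⟨x, hx⟩ := hG.2.2.2.2.2.1
        exact ⟨inr (inl x), by simp [hFdef, h], hx⟩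
    · -- c generic, c' special
      have hG := hGoodF c hc
      interval_cases h : c'.val
      · obtain ⟨x, hx⟩ := hG.2.2.2.2.1
        exact ⟨inr (inl x), hx, by simp [hFdef, h]⟩
      · obtain ⟨x, hx⟩ := hG.1
        exact ⟨inl (inl x), hx, by simp [hFdef, h]⟩
    · -- both generic
      have hne' := hinj c c' hc hc' hne
      have hcards : (F c').card ≤ (F c).card := by
        rw [hcardgen c hc, hcardgen c' hc']
      by_contra hcon
      push_neg at hcon
      have hsub' : F c ⊆ F c' := fun u hu => by
        by_contra hnu; exact hnu (hcon u hu) 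
      exact hne' (Finset.eq_of_subset_of_card_le hsub' hcards)
  -- hsepA1
  · intro x y hxy
    obtain ⟨c, hc⟩ := hmemX (sep ht2' x) (hSX (mem_image_of_mem _ (mem_univ x)))
    exact ⟨c, by simp [hc], by simp [hc, hxy.symm]⟩
  -- hsepA2
  · intro x y hxy
    have hy : (⟨y.val, by omega⟩ : Fin t1) ∈ (univ : Finset (Fin t1)) := mem_univ _
    obtain ⟨c, hc⟩ := hmemX (sep ht2' ⟨y.val, by omega⟩) (hSX (mem_image_of_mem _ hy))
    have hmmy : mm ht2' (⟨y.val, by omega⟩ : Fin t1) = y := by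
      simp [mm, Nat.mod_eq_of_lt y.isLt, Fin.ext_iff]
    refine ⟨c, by simp [hc, hmmy, hxy], by simp [hc, hmmy]⟩
  -- hsepB1
  · intro x y hxy
    have hx : (⟨x.val, by omega⟩ : Fin t1) ∈ (univ : Finset (Fin t1)) := mem_univ _
    obtain ⟨c, hc⟩ := hmemX (sep ht2' ⟨x.val, by omega⟩) (hSX (mem_image_of_mem _ hx))
    have hmmx : mm ht2' (⟨x.val, by omega⟩ : Fin t1) = x := by
      simp [mm, Nat.mod_eq_of_lt x.isLt, Fin.ext_iff]
    refine ⟨c, by simp [hc, hmmx], by simp [hc, hmmx, hxy.symm]⟩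
  -- hsepB2
  · intro x y hxy
    obtain ⟨c, hc⟩ := hmemX (sep ht2' y) (hSX (mem_image_of_mem _ (mem_univ y)))
    exact ⟨c, by simp [hc, hxy], by simp [hc]⟩

end Family

open Finset Sum Polynomial

/-- proper nonempty subset -/
def Prp {γ : Type*} [Fintype γ] (S : Finset γ) : Prop := S.Nonempty ∧ S ≠ univ

noncomputable def gp (s : ℕ) : Polynomial ℤ := (X + 1) ^ s - 1 - X ^ s

lemma coeff_gp (s k : ℕ) : (gp s).coeff k
    = (s.choose k : ℤ) - (if k = 0 then 1 else 0) - (if k = s then 1 else 0) := by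
  simp [gp, coeff_sub, coeff_X_add_one_pow, coeff_one, coeff_X_pow, eq_comm]

lemma cnt_base (s k : ℕ) (hs : 1 ≤ s) [DecidablePred (fun S : Finset (Fin s) => S.card = k ∧ Prp S)] :
    ((univ.filter (fun S : Finset (Fin s) => S.card = k ∧ Prp S)).card : ℤ)
      = (gp s).coeff k := by
  classical
  rw [coeff_gp]
  rcases Nat.eq_zero_or_pos k with rfl | hk
  · have : (univ.filter (fun S : Finset (Fin s) => S.card = 0 ∧ Prp S)) = ∅ := by
      ext S
      simp only [mem_filter, mem_univ, true_and, notMem_empty, iff_false]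
      rintro ⟨h0, ⟨hne, _⟩⟩
      exact hne.card_pos.ne' h0
    rw [this]
    simp
    omega
  rcases Nat.lt_or_ge k s with hks | hks
  · have hset : (univ.filter (fun S : Finset (Fin s) => S.card = k ∧ Prp S))
        = univ.filter (fun S : Finset (Fin s) => S.card = k) := by
      apply filter_congr
      intro S _
      simp only [and_iff_left_iff_imp]
      intro hc
      constructor
      · exact Finset.card_pos.mp (by omega)
      · intro h
        rw [h, card_univ, Fintype.card_fin] at hc
        omega
    rw [hset, ← Finset.powerset_univ, ← Finset.powersetCard_eq_filter,
      Finset.card_powersetCard, card_univ, Fintype.card_fin]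
    rw [if_neg (by omega), if_neg (by omega)]
    push_cast; ring
  rcases Nat.eq_or_lt_of_le hks with heq | hlt
  · have : (univ.filter (fun S : Finset (Fin s) => S.card = k ∧ Prp S)) = ∅ := by
      ext S
      simp only [mem_filter, mem_univ, true_and, notMem_empty, iff_false]
      rintro ⟨h0, ⟨_, hne⟩⟩
      exact hne (Finset.eq_univ_of_card S (by rw [h0, Fintype.card_fin, heq]))
    rw [this, ← heq, Nat.choose_self, if_neg (by omega), if_pos rfl]
    simp
  · have : (univ.filter (fun S : Finset (Fin s) => S.card = k ∧ Prp S)) = ∅ := by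
      ext S
      simp only [mem_filter, mem_univ, true_and, notMem_empty, iff_false]
      rintro ⟨h0, _⟩
      have := S.card_le_univ
      simp only [card_univ, Fintype.card_fin] at this
      omega
    rw [this, Nat.choose_eq_zero_of_lt hlt, if_neg (by omega), if_neg (by omega)]
    simp

lemma card_filter_sum_split {γ δ : Type*} [Fintype γ] [Fintype δ] [DecidableEq γ] [DecidableEq δ]
    (P : Finset γ → Prop) (Q : Finset δ → Prop) [DecidablePred P] [DecidablePred Q] :
    (univ.filter (fun T : Finset (γ ⊕ δ) => P T.toLeft ∧ Q T.toRight)).card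
      = (univ.filter P).card * (univ.filter Q).card := by
  rw [← card_product]
  refine Finset.card_nbij' (fun T => (T.toLeft, T.toRight)) (fun z => z.1.disjSum z.2)
    ?_ ?_ ?_ ?_
  · intro T hT
    simp only [Finset.mem_coe, mem_filter, mem_univ, true_and] at hT
    simp [mem_product, hT.1, hT.2]
  · intro z hz
    simp only [Finset.mem_coe, mem_product, mem_filter, mem_univ, true_and] at hz
    simp [hz.1, hz.2]
  · intro T _
    exact Finset.toLeft_disjSum_toRight
  · intro z _
    simp

lemma card_filter_card_split {γ δ : Type*} [Fintype γ] [Fintype δ] [DecidableEq γ] [DecidableEq δ]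
    (p : ℕ) (P : Finset γ → Prop) (Q : Finset δ → Prop) [DecidablePred P] [DecidablePred Q] :
    (univ.filter (fun T : Finset (γ ⊕ δ) => T.card = p ∧ P T.toLeft ∧ Q T.toRight)).card
      = ∑ ij ∈ Finset.HasAntidiagonal.antidiagonal p,
        (univ.filter (fun S : Finset γ => S.card = ij.1 ∧ P S)).card
          * (univ.filter (fun S : Finset δ => S.card = ij.2 ∧ Q S)).card := by
  classical
  rw [Finset.card_eq_sum_card_fiberwise
    (f := fun T : Finset (γ ⊕ δ) => (T.toLeft.card, T.toRight.card))
    (t := Finset.HasAntidiagonal.antidiagonal p) ?hmem]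
  case hmem =>
    intro T hT
    simp only [Finset.mem_coe, mem_filter, mem_univ, true_and] at hT
    rw [Finset.mem_coe, Finset.HasAntidiagonal.mem_antidiagonal]
    rw [Finset.card_toLeft_add_card_toRight]
    exact hT.1
  apply Finset.sum_congr rfl
  intro ij hij
  rw [Finset.HasAntidiagonal.mem_antidiagonal] at hij
  rw [← card_filter_sum_split]
  congr 1
  rw [Finset.filter_filter]
  apply filter_congr
  intro T _
  constructor
  · rintro ⟨⟨hc, hP, hQ⟩, hf⟩
    have h1 : T.toLeft.card = ij.1 := congrArg Prod.fst hf
    have h2 : T.toRight.card = ij.2 := congrArg Prod.snd hf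
    exact ⟨⟨h1, hP⟩, ⟨h2, hQ⟩⟩
  · rintro ⟨⟨h1, hP⟩, ⟨h2, hQ⟩⟩
    refine ⟨⟨?_, hP, hQ⟩, ?_⟩
    · rw [← Finset.card_toLeft_add_card_toRight, h1, h2, hij]
    · rw [h1, h2]

lemma cnt_pair (t1 t2 : ℕ) (h1 : 1 ≤ t1) (h2 : 1 ≤ t2) (j : ℕ)
    [DecidablePred (fun S : Finset (Fin t1 ⊕ Fin t2) => S.card = j ∧ Prp S.toLeft ∧ Prp S.toRight)] :
    ((univ.filter (fun S : Finset (Fin t1 ⊕ Fin t2) =>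
        S.card = j ∧ Prp S.toLeft ∧ Prp S.toRight)).card : ℤ)
      = (gp t1 * gp t2).coeff j := by
  classical
  rw [coeff_mul]
  have H := card_filter_card_split (γ := Fin t1) (δ := Fin t2) j Prp Prp
  have H2 : (univ.filter (fun S : Finset (Fin t1 ⊕ Fin t2) =>
      S.card = j ∧ Prp S.toLeft ∧ Prp S.toRight)).card
      = ∑ ij ∈ Finset.HasAntidiagonal.antidiagonal j,
        (univ.filter (fun S : Finset (Fin t1) => S.card = ij.1 ∧ Prp S)).card
          * (univ.filter (fun S : Finset (Fin t2) => S.card = ij.2 ∧ Prp S)).card := by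
    convert H using 2
    ext T
    simp
  rw [H2]
  push_cast
  apply Finset.sum_congr rfl
  intro ij _
  rw [← cnt_base t1 ij.1 h1, ← cnt_base t2 ij.2 h2]

section CntGood
variable (t1 t2 : ℕ)

lemma isGood_iff (T : Finset (Uty t1 t2)) :
    IsGood T ↔ (Prp T.toLeft.toLeft ∧ Prp T.toLeft.toRight)
      ∧ (Prp T.toRight.toLeft ∧ Prp T.toRight.toRight) := by
  have h1 : ∀ γ [Fintype γ] (S : Finset γ), (S ≠ univ ↔ ∃ a, a ∉ S) := by
    intro γ _ S
    rw [Ne, Finset.eq_univ_iff_forall]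
    push_neg
    rfl
  constructor
  · rintro ⟨⟨a1, h1'⟩, ⟨a2, h2'⟩, ⟨a3, h3'⟩, ⟨a4, h4'⟩, ⟨b1, h5'⟩, ⟨b2, h6'⟩, ⟨b3, h7'⟩, ⟨b4, h8'⟩⟩
    refine ⟨⟨⟨⟨a1, by simpa using h1'⟩, (h1 _ _).mpr ⟨a2, by simpa using h2'⟩⟩,
      ⟨⟨a3, by simpa using h3'⟩, (h1 _ _).mpr ⟨a4, by simpa using h4'⟩⟩⟩,
      ⟨⟨⟨b1, by simpa using h5'⟩, (h1 _ _).mpr ⟨b2, by simpa using h6'⟩⟩,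
      ⟨⟨b3, by simpa using h7'⟩, (h1 _ _).mpr ⟨b4, by simpa using h8'⟩⟩⟩⟩
  · rintro ⟨⟨⟨⟨a1, h1'⟩, hA2⟩, ⟨⟨a3, h3'⟩, hA4⟩⟩, ⟨⟨⟨b1, h5'⟩, hB2⟩, ⟨⟨b3, h7'⟩, hB4⟩⟩⟩
    obtain ⟨a2, h2'⟩ := (h1 _ _).mp hA2
    obtain ⟨a4, h4'⟩ := (h1 _ _).mp hA4
    obtain ⟨b2, h6'⟩ := (h1 _ _).mp hB2
    obtain ⟨b4, h8'⟩ := (h1 _ _).mp hB4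
    exact ⟨⟨a1, by simpa using h1'⟩, ⟨a2, by simpa using h2'⟩,
      ⟨a3, by simpa using h3'⟩, ⟨a4, by simpa using h4'⟩,
      ⟨b1, by simpa using h5'⟩, ⟨b2, by simpa using h6'⟩,
      ⟨b3, by simpa using h7'⟩, ⟨b4, by simpa using h8'⟩⟩

lemma cnt_good (h1 : 1 ≤ t1) (h2 : 1 ≤ t2) :
    ((Goodset t1 t2).card : ℤ)
      = ((gp t1 * gp t2) * (gp t2 * gp t1)).coeff (t1 + t2) := by
  classical
  have hGset : Goodset t1 t2 = univ.filter (fun T : Finset (Uty t1 t2) =>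
      T.card = t1 + t2 ∧ (Prp T.toLeft.toLeft ∧ Prp T.toLeft.toRight)
        ∧ (Prp T.toRight.toLeft ∧ Prp T.toRight.toRight)) := by
    ext T
    rw [mem_Goodset, mem_filter]
    simp only [mem_univ, true_and]
    rw [isGood_iff]
  rw [hGset, coeff_mul]
  have H := card_filter_card_split (γ := Fin t1 ⊕ Fin t2) (δ := Fin t2 ⊕ Fin t1) (t1 + t2)
    (fun S => Prp S.toLeft ∧ Prp S.toRight) (fun S => Prp S.toLeft ∧ Prp S.toRight)
  have H2 : (univ.filter (fun T : Finset (Uty t1 t2) =>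
      T.card = t1 + t2 ∧ (Prp T.toLeft.toLeft ∧ Prp T.toLeft.toRight)
        ∧ (Prp T.toRight.toLeft ∧ Prp T.toRight.toRight))).card
      = ∑ ij ∈ Finset.HasAntidiagonal.antidiagonal (t1 + t2),
        (univ.filter (fun S : Finset (Fin t1 ⊕ Fin t2) =>
          S.card = ij.1 ∧ Prp S.toLeft ∧ Prp S.toRight)).card
          * (univ.filter (fun S : Finset (Fin t2 ⊕ Fin t1) =>
          S.card = ij.2 ∧ Prp S.toLeft ∧ Prp S.toRight)).card := by
    convert H using 2
  rw [H2]
  push_cast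
  apply Finset.sum_congr rfl
  intro ij _
  rw [← cnt_pair t1 t2 h1 h2 ij.1, ← cnt_pair t2 t1 h2 h1 ij.2]
end CntGood

set_option maxHeartbeats 2000000 in
lemma eval_even (h : ℕ) (hh : 2 ≤ h) :
    ((gp h * gp h) * (gp h * gp h)).coeff (2*h)
      = ((4*h).choose (2*h) : ℤ) - 8 * ((3*h).choose (2*h) : ℤ) + 12 * ((2*h).choose h : ℤ) - 6 := by
  have hpoly : ((gp h * gp h) * (gp h * gp h)) = ((X+1:ℤ[X])^(0) * X^(0)) + ((X+1:ℤ[X])^(0) * X^(h)) * (4 : ℤ[X]) + ((X+1:ℤ[X])^(0) * X^(2*h)) * (6 : ℤ[X]) + ((X+1:ℤ[X])^(0) * X^(3*h)) * (4 : ℤ[X]) + ((X+1:ℤ[X])^(0) * X^(4*h)) - ((X+1:ℤ[X])^(h) * X^(0)) * (4 : ℤ[X]) - ((X+1:ℤ[X])^(h) * X^(h)) * (12 : ℤ[X]) - ((X+1:ℤ[X])^(h) * X^(2*h)) * (12 : ℤ[X]) - ((X+1:ℤ[X])^(h) * X^(3*h)) * (4 : ℤ[X]) + ((X+1:ℤ[X])^(2*h)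 * X^(0)) * (6 : ℤ[X]) + ((X+1:ℤ[X])^(2*h) * X^(h)) * (12 : ℤ[X]) + ((X+1:ℤ[X])^(2*h) * X^(2*h)) * (6 : ℤ[X]) - ((X+1:ℤ[X])^(3*h) * X^(0)) * (4 : ℤ[X]) - ((X+1:ℤ[X])^(3*h) * X^(h)) * (4 : ℤ[X]) + ((X+1:ℤ[X])^(4*h) * X^(0)) := by
    simp only [gp]
    ring
  have e1 : ((X+1:ℤ[X])^(0) * X^(0)).coeff (2*h) = 0 := by
    rw [Polynomial.coeff_mul_X_pow', if_pos (by omega), Polynomial.coeff_X_add_one_pow,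
      show 2*h - (0) = 2*h by omega, Nat.choose_eq_zero_of_lt (by omega)]
    simp
  have e2 : ((X+1:ℤ[X])^(0) * X^(h)).coeff (2*h) = 0 := by
    rw [Polynomial.coeff_mul_X_pow', if_pos (by omega), Polynomial.coeff_X_add_one_pow,
      show 2*h - (h) = h by omega, Nat.choose_eq_zero_of_lt (by omega)]
    simp
  have e3 : ((X+1:ℤ[X])^(0) * X^(2*h)).coeff (2*h) = 1 := by
    rw [Polynomial.coeff_mul_X_pow', if_pos (by omega), Polynomial.coeff_X_add_one_pow,
      show 2*h - (2*h) = 0 by omega]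
    simp
  have e4 : ((X+1:ℤ[X])^(0) * X^(3*h)).coeff (2*h) = 0 := by
    rw [Polynomial.coeff_mul_X_pow', if_neg (by omega)]
  have e5 : ((X+1:ℤ[X])^(0) * X^(4*h)).coeff (2*h) = 0 := by
    rw [Polynomial.coeff_mul_X_pow', if_neg (by omega)]
  have e6 : ((X+1:ℤ[X])^(h) * X^(0)).coeff (2*h) = 0 := by
    rw [Polynomial.coeff_mul_X_pow', if_pos (by omega), Polynomial.coeff_X_add_one_pow,
      show 2*h - (0) = 2*h by omega, Nat.choose_eq_zero_of_lt (by omega)]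
    simp
  have e7 : ((X+1:ℤ[X])^(h) * X^(h)).coeff (2*h) = 1 := by
    rw [Polynomial.coeff_mul_X_pow', if_pos (by omega), Polynomial.coeff_X_add_one_pow,
      show 2*h - (h) = h by omega]
    simp
  have e8 : ((X+1:ℤ[X])^(h) * X^(2*h)).coeff (2*h) = 1 := by
    rw [Polynomial.coeff_mul_X_pow', if_pos (by omega), Polynomial.coeff_X_add_one_pow,
      show 2*h - (2*h) = 0 by omega]
    simp
  have e9 : ((X+1:ℤ[X])^(h) * X^(3*h)).coeff (2*h) = 0 := by
    rw [Polynomial.coeff_mul_X_pow', if_neg (by omega)]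
  have e10 : ((X+1:ℤ[X])^(2*h) * X^(0)).coeff (2*h) = 1 := by
    rw [Polynomial.coeff_mul_X_pow', if_pos (by omega), Polynomial.coeff_X_add_one_pow,
      show 2*h - (0) = 2*h by omega]
    simp
  have e11 : ((X+1:ℤ[X])^(2*h) * X^(h)).coeff (2*h) = ((2*h).choose (h) : ℤ) := by
    rw [Polynomial.coeff_mul_X_pow', if_pos (by omega), Polynomial.coeff_X_add_one_pow,
      show 2*h - (h) = h by omega]
  have e12 : ((X+1:ℤ[X])^(2*h) * X^(2*h)).coeff (2*h) = 1 := by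
    rw [Polynomial.coeff_mul_X_pow', if_pos (by omega), Polynomial.coeff_X_add_one_pow,
      show 2*h - (2*h) = 0 by omega]
    simp
  have e13 : ((X+1:ℤ[X])^(3*h) * X^(0)).coeff (2*h) = ((3*h).choose (2*h) : ℤ) := by
    rw [Polynomial.coeff_mul_X_pow', if_pos (by omega), Polynomial.coeff_X_add_one_pow,
      show 2*h - (0) = 2*h by omega]
  have e14 : ((X+1:ℤ[X])^(3*h) * X^(h)).coeff (2*h) = ((3*h).choose (2*h) : ℤ) := by
    rw [Polynomial.coeff_mul_X_pow', if_pos (by omega), Polynomial.coeff_X_add_one_pow,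
      show 2*h - (h) = (3*h) - (2*h) by omega,
      Nat.choose_symm (by omega : (2*h) ≤ (3*h))]
  have e15 : ((X+1:ℤ[X])^(4*h) * X^(0)).coeff (2*h) = ((4*h).choose (2*h) : ℤ) := by
    rw [Polynomial.coeff_mul_X_pow', if_pos (by omega), Polynomial.coeff_X_add_one_pow,
      show 2*h - (0) = 2*h by omega]
  rw [hpoly]
  simp only [Polynomial.coeff_add, Polynomial.coeff_sub, Polynomial.coeff_neg,
    Polynomial.coeff_mul_ofNat, e1, e2, e3, e4, e5, e6, e7, e8, e9, e10, e11, e12, e13, e14, e15]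
  push_cast
  ring

set_option maxHeartbeats 2000000 in
lemma eval_odd (x : ℕ) (hx : 2 ≤ x) :
    ((gp (x+1) * gp x) * (gp x * gp (x+1))).coeff (2*x+1)
      = ((4*x+2).choose (2*x+1) : ℤ) - 4 * ((3*x+2).choose (x+1) : ℤ) - 4 * ((3*x+1).choose x : ℤ)
        + 2 * ((2*x+2).choose (x+1) : ℤ) + 8 * ((2*x+1).choose x : ℤ) + 2 * ((2*x).choose x : ℤ) - 4 := by
  have hpoly : ((gp (x+1) * gp x) * (gp x * gp (x+1))) = ((X+1:ℤ[X])^(0) * X^(0)) + ((X+1:ℤ[X])^(0) * X^(x)) * (2 : ℤ[X]) + ((X+1:ℤ[X])^(0) * X^(x+1)) * (2 : ℤ[X]) + ((X+1:ℤ[X])^(0) * X^(2*x)) + ((X+1:ℤ[X])^(0) * X^(2*x+1)) * (4 : ℤ[X]) + ((X+1:ℤ[X])^(0) * X^(2*x+2)) + ((X+1:ℤ[X])^(0) * X^(3*x+1)) * (2 : ℤ[X]) + ((X+1:ℤ[X])^(0) * X^(3*x+2)) * (2 : ℤ[X]) + ((X+1:ℤ[X])^(0) * X^(4*x+2)) -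 ((X+1:ℤ[X])^(x) * X^(0)) * (2 : ℤ[X]) - ((X+1:ℤ[X])^(x) * X^(x)) * (2 : ℤ[X]) - ((X+1:ℤ[X])^(x) * X^(x+1)) * (4 : ℤ[X]) - ((X+1:ℤ[X])^(x) * X^(2*x+1)) * (4 : ℤ[X]) - ((X+1:ℤ[X])^(x) * X^(2*x+2)) * (2 : ℤ[X]) - ((X+1:ℤ[X])^(x) * X^(3*x+2)) * (2 : ℤ[X]) - ((X+1:ℤ[X])^(x+1) * X^(0)) * (2 : ℤ[X]) - ((X+1:ℤ[X])^(x+1) * X^(x)) * (4 : ℤ[X]) - ((X+1:ℤ[X])^(x+1) * X^(x+1)) * (2 : ℤ[X]) - ((X+1:ℤ[X])^(x+1) * X^(2*x)) * (2 : ℤ[X]) - ((X+1:ℤ[X])^(x+1) * X^(2*x+1)) * (4 : ℤ[X]) - ((X+1:ℤ[X])^(x+1) * X^(3*x+1)) * (2 : ℤ[X]) + ((X+1:ℤ[X])^(2*x) * X^(0)) + ((X+1:ℤ[X])^(2*x) * X^(x+1)) * (2 : ℤ[X]) + ((X+1:ℤ[X])^(2*x) * X^(2*x+2)) + ((X+1:ℤ[X])^(2*x+1)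 * X^(0)) * (4 : ℤ[X]) + ((X+1:ℤ[X])^(2*x+1) * X^(x)) * (4 : ℤ[X]) + ((X+1:ℤ[X])^(2*x+1) * X^(x+1)) * (4 : ℤ[X]) + ((X+1:ℤ[X])^(2*x+1) * X^(2*x+1)) * (4 : ℤ[X]) + ((X+1:ℤ[X])^(2*x+2) * X^(0)) + ((X+1:ℤ[X])^(2*x+2) * X^(x)) * (2 : ℤ[X]) + ((X+1:ℤ[X])^(2*x+2) * X^(2*x)) - ((X+1:ℤ[X])^(3*x+1) * X^(0)) * (2 : ℤ[X]) - ((X+1:ℤ[X])^(3*x+1) * X^(x+1)) * (2 : ℤ[X]) - ((X+1:ℤ[X])^(3*x+2) * X^(0)) * (2 : ℤ[X]) - ((X+1:ℤ[X])^(3*x+2) * X^(x)) * (2 : ℤ[X]) + ((X+1:ℤ[X])^(4*x+2) * X^(0)) := by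
    simp only [gp]
    ring
  have e1 : ((X+1:ℤ[X])^(0) * X^(0)).coeff (2*x+1) = 0 := by
    rw [Polynomial.coeff_mul_X_pow', if_pos (by omega), Polynomial.coeff_X_add_one_pow,
      show 2*x+1 - (0) = 2*x+1 by omega, Nat.choose_eq_zero_of_lt (by omega)]
    simp
  have e2 : ((X+1:ℤ[X])^(0) * X^(x)).coeff (2*x+1) = 0 := by
    rw [Polynomial.coeff_mul_X_pow', if_pos (by omega), Polynomial.coeff_X_add_one_pow,
      show 2*x+1 - (x) = x+1 by omega, Nat.choose_eq_zero_of_lt (by omega)]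
    simp
  have e3 : ((X+1:ℤ[X])^(0) * X^(x+1)).coeff (2*x+1) = 0 := by
    rw [Polynomial.coeff_mul_X_pow', if_pos (by omega), Polynomial.coeff_X_add_one_pow,
      show 2*x+1 - (x+1) = x by omega, Nat.choose_eq_zero_of_lt (by omega)]
    simp
  have e4 : ((X+1:ℤ[X])^(0) * X^(2*x)).coeff (2*x+1) = 0 := by
    rw [Polynomial.coeff_mul_X_pow', if_pos (by omega), Polynomial.coeff_X_add_one_pow,
      show 2*x+1 - (2*x) = 1 by omega, Nat.choose_eq_zero_of_lt (by omega)]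
    simp
  have e5 : ((X+1:ℤ[X])^(0) * X^(2*x+1)).coeff (2*x+1) = 1 := by
    rw [Polynomial.coeff_mul_X_pow', if_pos (by omega), Polynomial.coeff_X_add_one_pow,
      show 2*x+1 - (2*x+1) = 0 by omega]
    simp
  have e6 : ((X+1:ℤ[X])^(0) * X^(2*x+2)).coeff (2*x+1) = 0 := by
    rw [Polynomial.coeff_mul_X_pow', if_neg (by omega)]
  have e7 : ((X+1:ℤ[X])^(0) * X^(3*x+1)).coeff (2*x+1) = 0 := by
    rw [Polynomial.coeff_mul_X_pow', if_neg (by omega)]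
  have e8 : ((X+1:ℤ[X])^(0) * X^(3*x+2)).coeff (2*x+1) = 0 := by
    rw [Polynomial.coeff_mul_X_pow', if_neg (by omega)]
  have e9 : ((X+1:ℤ[X])^(0) * X^(4*x+2)).coeff (2*x+1) = 0 := by
    rw [Polynomial.coeff_mul_X_pow', if_neg (by omega)]
  have e10 : ((X+1:ℤ[X])^(x) * X^(0)).coeff (2*x+1) = 0 := by
    rw [Polynomial.coeff_mul_X_pow', if_pos (by omega), Polynomial.coeff_X_add_one_pow,
      show 2*x+1 - (0) = 2*x+1 by omega, Nat.choose_eq_zero_of_lt (by omega)]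
    simp
  have e11 : ((X+1:ℤ[X])^(x) * X^(x)).coeff (2*x+1) = 0 := by
    rw [Polynomial.coeff_mul_X_pow', if_pos (by omega), Polynomial.coeff_X_add_one_pow,
      show 2*x+1 - (x) = x+1 by omega, Nat.choose_eq_zero_of_lt (by omega)]
    simp
  have e12 : ((X+1:ℤ[X])^(x) * X^(x+1)).coeff (2*x+1) = 1 := by
    rw [Polynomial.coeff_mul_X_pow', if_pos (by omega), Polynomial.coeff_X_add_one_pow,
      show 2*x+1 - (x+1) = x by omega]
    simp
  have e13 : ((X+1:ℤ[X])^(x) * X^(2*x+1)).coeff (2*x+1) = 1 := by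
    rw [Polynomial.coeff_mul_X_pow', if_pos (by omega), Polynomial.coeff_X_add_one_pow,
      show 2*x+1 - (2*x+1) = 0 by omega]
    simp
  have e14 : ((X+1:ℤ[X])^(x) * X^(2*x+2)).coeff (2*x+1) = 0 := by
    rw [Polynomial.coeff_mul_X_pow', if_neg (by omega)]
  have e15 : ((X+1:ℤ[X])^(x) * X^(3*x+2)).coeff (2*x+1) = 0 := by
    rw [Polynomial.coeff_mul_X_pow', if_neg (by omega)]
  have e16 : ((X+1:ℤ[X])^(x+1) * X^(0)).coeff (2*x+1) = 0 := by
    rw [Polynomial.coeff_mul_X_pow', if_pos (by omega), Polynomial.coeff_X_add_one_pow,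
      show 2*x+1 - (0) = 2*x+1 by omega, Nat.choose_eq_zero_of_lt (by omega)]
    simp
  have e17 : ((X+1:ℤ[X])^(x+1) * X^(x)).coeff (2*x+1) = 1 := by
    rw [Polynomial.coeff_mul_X_pow', if_pos (by omega), Polynomial.coeff_X_add_one_pow,
      show 2*x+1 - (x) = x+1 by omega]
    simp
  have e18 : ((X+1:ℤ[X])^(x+1) * X^(x+1)).coeff (2*x+1) = ((x+1 : ℕ) : ℤ) := by
    rw [Polynomial.coeff_mul_X_pow', if_pos (by omega), Polynomial.coeff_X_add_one_pow,
      show 2*x+1 - (x+1) = (x+1) - 1 by omega,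
      Nat.choose_symm (by omega : 1 ≤ (x+1)), Nat.choose_one_right]
  have e19 : ((X+1:ℤ[X])^(x+1) * X^(2*x)).coeff (2*x+1) = ((x+1 : ℕ) : ℤ) := by
    rw [Polynomial.coeff_mul_X_pow', if_pos (by omega), Polynomial.coeff_X_add_one_pow,
      show 2*x+1 - (2*x) = 1 by omega, Nat.choose_one_right]
  have e20 : ((X+1:ℤ[X])^(x+1) * X^(2*x+1)).coeff (2*x+1) = 1 := by
    rw [Polynomial.coeff_mul_X_pow', if_pos (by omega), Polynomial.coeff_X_add_one_pow,
      show 2*x+1 - (2*x+1) = 0 by omega]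
    simp
  have e21 : ((X+1:ℤ[X])^(x+1) * X^(3*x+1)).coeff (2*x+1) = 0 := by
    rw [Polynomial.coeff_mul_X_pow', if_neg (by omega)]
  have e22 : ((X+1:ℤ[X])^(2*x) * X^(0)).coeff (2*x+1) = 0 := by
    rw [Polynomial.coeff_mul_X_pow', if_pos (by omega), Polynomial.coeff_X_add_one_pow,
      show 2*x+1 - (0) = 2*x+1 by omega, Nat.choose_eq_zero_of_lt (by omega)]
    simp
  have e23 : ((X+1:ℤ[X])^(2*x) * X^(x+1)).coeff (2*x+1) = ((2*x).choose (x) : ℤ) := by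
    rw [Polynomial.coeff_mul_X_pow', if_pos (by omega), Polynomial.coeff_X_add_one_pow,
      show 2*x+1 - (x+1) = x by omega]
  have e24 : ((X+1:ℤ[X])^(2*x) * X^(2*x+2)).coeff (2*x+1) = 0 := by
    rw [Polynomial.coeff_mul_X_pow', if_neg (by omega)]
  have e25 : ((X+1:ℤ[X])^(2*x+1) * X^(0)).coeff (2*x+1) = 1 := by
    rw [Polynomial.coeff_mul_X_pow', if_pos (by omega), Polynomial.coeff_X_add_one_pow,
      show 2*x+1 - (0) = 2*x+1 by omega]
    simp
  have e26 : ((X+1:ℤ[X])^(2*x+1) * X^(x)).coeff (2*x+1) = ((2*x+1).choose (x) : ℤ) := by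
    rw [Polynomial.coeff_mul_X_pow', if_pos (by omega), Polynomial.coeff_X_add_one_pow,
      show 2*x+1 - (x) = (2*x+1) - (x) by omega,
      Nat.choose_symm (by omega : (x) ≤ (2*x+1))]
  have e27 : ((X+1:ℤ[X])^(2*x+1) * X^(x+1)).coeff (2*x+1) = ((2*x+1).choose (x) : ℤ) := by
    rw [Polynomial.coeff_mul_X_pow', if_pos (by omega), Polynomial.coeff_X_add_one_pow,
      show 2*x+1 - (x+1) = x by omega]
  have e28 : ((X+1:ℤ[X])^(2*x+1) * X^(2*x+1)).coeff (2*x+1) = 1 := by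
    rw [Polynomial.coeff_mul_X_pow', if_pos (by omega), Polynomial.coeff_X_add_one_pow,
      show 2*x+1 - (2*x+1) = 0 by omega]
    simp
  have e29 : ((X+1:ℤ[X])^(2*x+2) * X^(0)).coeff (2*x+1) = ((2*x+2 : ℕ) : ℤ) := by
    rw [Polynomial.coeff_mul_X_pow', if_pos (by omega), Polynomial.coeff_X_add_one_pow,
      show 2*x+1 - (0) = (2*x+2) - 1 by omega,
      Nat.choose_symm (by omega : 1 ≤ (2*x+2)), Nat.choose_one_right]
  have e30 : ((X+1:ℤ[X])^(2*x+2) * X^(x)).coeff (2*x+1) = ((2*x+2).choose (x+1) : ℤ) := by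
    rw [Polynomial.coeff_mul_X_pow', if_pos (by omega), Polynomial.coeff_X_add_one_pow,
      show 2*x+1 - (x) = x+1 by omega]
  have e31 : ((X+1:ℤ[X])^(2*x+2) * X^(2*x)).coeff (2*x+1) = ((2*x+2 : ℕ) : ℤ) := by
    rw [Polynomial.coeff_mul_X_pow', if_pos (by omega), Polynomial.coeff_X_add_one_pow,
      show 2*x+1 - (2*x) = 1 by omega, Nat.choose_one_right]
  have e32 : ((X+1:ℤ[X])^(3*x+1) * X^(0)).coeff (2*x+1) = ((3*x+1).choose (x) : ℤ) := by
    rw [Polynomial.coeff_mul_X_pow', if_pos (by omega), Polynomial.coeff_X_add_one_pow,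
      show 2*x+1 - (0) = (3*x+1) - (x) by omega,
      Nat.choose_symm (by omega : (x) ≤ (3*x+1))]
  have e33 : ((X+1:ℤ[X])^(3*x+1) * X^(x+1)).coeff (2*x+1) = ((3*x+1).choose (x) : ℤ) := by
    rw [Polynomial.coeff_mul_X_pow', if_pos (by omega), Polynomial.coeff_X_add_one_pow,
      show 2*x+1 - (x+1) = x by omega]
  have e34 : ((X+1:ℤ[X])^(3*x+2) * X^(0)).coeff (2*x+1) = ((3*x+2).choose (x+1) : ℤ) := by
    rw [Polynomial.coeff_mul_X_pow', if_pos (by omega), Polynomial.coeff_X_add_one_pow,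
      show 2*x+1 - (0) = (3*x+2) - (x+1) by omega,
      Nat.choose_symm (by omega : (x+1) ≤ (3*x+2))]
  have e35 : ((X+1:ℤ[X])^(3*x+2) * X^(x)).coeff (2*x+1) = ((3*x+2).choose (x+1) : ℤ) := by
    rw [Polynomial.coeff_mul_X_pow', if_pos (by omega), Polynomial.coeff_X_add_one_pow,
      show 2*x+1 - (x) = x+1 by omega]
  have e36 : ((X+1:ℤ[X])^(4*x+2) * X^(0)).coeff (2*x+1) = ((4*x+2).choose (2*x+1) : ℤ) := by
    rw [Polynomial.coeff_mul_X_pow', if_pos (by omega), Polynomial.coeff_X_add_one_pow,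
      show 2*x+1 - (0) = 2*x+1 by omega]
  rw [hpoly]
  simp only [Polynomial.coeff_add, Polynomial.coeff_sub, Polynomial.coeff_neg,
    Polynomial.coeff_mul_ofNat, e1, e2, e3, e4, e5, e6, e7, e8, e9, e10, e11, e12, e13, e14, e15, e16, e17, e18, e19, e20, e21, e22, e23, e24, e25, e26, e27, e28, e29, e30, e31, e32, e33, e34, e35, e36]
  push_cast
  ring

lemma goodcard_even (h : ℕ) (hh : 2 ≤ h) :
    (((Goodset h h).card : ℤ))
      = ((4*h).choose (2*h) : ℤ) - 8 * ((3*h).choose (2*h) : ℤ) + 12 * ((2*h).choose h : ℤ) - 6 := by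
  rw [cnt_good h h (by omega) (by omega), show h + h = 2*h by omega, eval_even h hh]

lemma goodcard_odd (x : ℕ) (hx : 2 ≤ x) :
    (((Goodset (x+1) x).card : ℤ))
      = ((4*x+2).choose (2*x+1) : ℤ) - 4 * ((3*x+2).choose (x+1) : ℤ) - 4 * ((3*x+1).choose x : ℤ)
        + 2 * ((2*x+2).choose (x+1) : ℤ) + 8 * ((2*x+1).choose x : ℤ) + 2 * ((2*x).choose x : ℤ) - 4 := by
  rw [cnt_good (x+1) x (by omega) (by omega), show (x+1) + x = 2*x+1 by omega, eval_odd x hx]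
section Lift

/-- subtype of a sigma type by a predicate on the base -/
def sigmaSubtypeEquiv {ι : Type*} (β : ι → Type*) (P : ι → Prop) :
    {x : Σ i, β i // P x.1} ≃ Σ i : {i // P i}, β i.1 where
  toFun x := ⟨⟨x.1.1, x.2⟩, x.1.2⟩
  invFun y := ⟨⟨y.1.1, y.2⟩, y.1.2⟩
  left_inv := by rintro ⟨⟨i, b⟩, h⟩; rfl
  right_inv := by rintro ⟨⟨i, h⟩, b⟩; rfl

lemma card_fiber {m : ℕ} (β : Fin m → ℕ) (P : Fin m → Prop) [DecidablePred P] :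
    Fintype.card {x : Σ i, Fin (β i) // P x.1} = ∑ i ∈ univ.filter P, β i := by
  rw [Fintype.card_congr (sigmaSubtypeEquiv _ P), Fintype.card_sigma]
  simp only [Fintype.card_fin]
  rw [← Finset.sum_subtype (univ.filter P) (fun x => by simp) β]

variable {t1 t2 q : ℕ}

def eW0 : (Fin t1 ⊕ Fin t2) ≃ {w : Wty t1 t2 q // sdW w = 0} where
  toFun u := ⟨inl (inl u), rfl⟩
  invFun w :=
    match w with
    | ⟨inl (inl u), _⟩ => u
    | ⟨inl (inr _), h⟩ => absurd h (by simp [sdW, Fin.ext_iff])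
    | ⟨inr _, h⟩ => absurd h (by simp [sdW, Fin.ext_iff])
  left_inv u := rfl
  right_inv := by rintro ⟨(((a|a)|(b|b))|c), h⟩ <;> first | rfl | (exact absurd h (by simp [sdW, Fin.ext_iff]))

def eW1 : (Fin t2 ⊕ Fin t1) ≃ {w : Wty t1 t2 q // sdW w = 1} where
  toFun u := ⟨inl (inr u), rfl⟩
  invFun w :=
    match w with
    | ⟨inl (inr u), _⟩ => u
    | ⟨inl (inl _), h⟩ => absurd h (by simp [sdW, Fin.ext_iff])
    | ⟨inr _, h⟩ => absurd h (by simp [sdW, Fin.ext_iff])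
  left_inv u := rfl
  right_inv := by rintro ⟨(((a|a)|(b|b))|c), h⟩ <;> first | rfl | (exact absurd h (by simp [sdW, Fin.ext_iff]))

def eW2 : (Fin q) ≃ {w : Wty t1 t2 q // sdW w = 2} where
  toFun c := ⟨inr c, rfl⟩
  invFun w :=
    match w with
    | ⟨inr c, _⟩ => c
    | ⟨inl (inr _), h⟩ => absurd h (by simp [sdW, Fin.ext_iff])
    | ⟨inl (inl _), h⟩ => absurd h (by simp [sdW, Fin.ext_iff])
  left_inv c := rfl
  right_inv := by rintro ⟨(((a|a)|(b|b))|c), h⟩ <;> first | rfl | (exact absurd h (by simp [sdW, Fin.ext_iff]))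

end Lift


end Aux

/-- If the parts of `K(p_1,…,p_n)` can be split into two groups each of total size `p ≥ 4`,
and `q` lies in the stated range (governed by `Φ_even(p)` resp. `Φ_odd(p)` in closed form),
then `K(p_1,…,p_n,q)` has orientation number 2. -/
theorem multipartite_orientation_number (n : ℕ) (hn : 2 ≤ n) (pp : Fin n → ℕ)
    (hpp : ∀ i, 1 ≤ pp i) (q p r : ℕ) (hr : r ≤ n) (hp4 : 4 ≤ p)
    (h1 : ∑ i ∈ Finset.univ.filter (fun i : Fin n => (i : ℕ) < r), pp i = p)
    (h2 : ∑ i ∈ Finset.univ.filter (fun i : Fin n => r ≤ (i : ℕ)), pp i = p)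
    (hq : (Even p ∧ p + 2 ≤ q ∧
            (q : ℤ) ≤ (2 * p).choose p - 8 * (3 * p / 2).choose p
              + 12 * p.choose (p / 2) - 6 + 2) ∨
          (Odd p ∧ p + 3 ≤ q ∧
            (q : ℤ) ≤ (2 * p).choose p - 4 * (3 * (p / 2) + 2).choose (p / 2 + 1)
              - 4 * (3 * (p / 2) + 1).choose (p / 2)
              + 2 * (2 * (p / 2) + 2).choose (p / 2 + 1)
              + 8 * (2 * (p / 2) + 1).choose (p / 2)
              + 2 * (2 * (p / 2)).choose (p / 2) - 4 + 2)) :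
    orientationNumber
      (SimpleGraph.completeMultipartiteGraph fun i : Fin (n + 1) => Fin ((Fin.snoc pp q : Fin (n + 1) → ℕ) i)) = 2 := by
  classical
  -- step 1: choose parameters and a good family
  obtain ⟨t1, t2, ht2, ht12, htsum, hq2, F, hF⟩ :
      ∃ t1 t2 : ℕ, 2 ≤ t2 ∧ t2 ≤ t1 ∧ t1 + t2 = p ∧ 2 ≤ q ∧
        ∃ F : Fin q → Finset (Uty t1 t2), FamOK F := by
    rcases hq with ⟨hev, hql, hqu⟩ | ⟨hod, hql, hqu⟩
    · -- even case
      have hp : p = 2 * (p / 2) := by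
        rw [Nat.even_iff] at hev; omega
      set h := p / 2 with hh
      have hh2 : 2 ≤ h := by omega
      refine ⟨h, h, hh2, le_rfl, by omega, by omega, ?_⟩
      apply exists_famOK hh2 hh2 le_rfl (by omega)
      have hgc := goodcard_even h hh2
      have harith1 : 2 * p = 4 * h := by omega
      have harith2 : 3 * p / 2 = 3 * h := by omega
      have harith3 : p = 2 * h := by omega
      have harith4 : p / 2 = h := by omega
      rw [harith1, harith2, harith3] at hqu
      omega
    · -- odd case
      have hp : p = 2 * (p / 2) + 1 := by
        rw [Nat.odd_iff] at hod; omega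
      set x := p / 2 with hx
      have hx2 : 2 ≤ x := by omega
      refine ⟨x + 1, x, hx2, by omega, by omega, by omega, ?_⟩
      apply exists_famOK (by omega) hx2 (by omega) (by omega)
      have hgc := goodcard_odd x hx2
      have harith1 : 2 * p = 4 * x + 2 := by omega
      have harith3 : p = 2 * x + 1 := by omega
      rw [harith1, harith3] at hqu
      omega
  have ht1 : 2 ≤ t1 := le_trans ht2 ht12
  -- notation
  set V := (Σ i : Fin (n + 1), Fin ((Fin.snoc pp q : Fin (n + 1) → ℕ) i)) with hV
  set G := (SimpleGraph.completeMultipartiteGraph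
      fun i : Fin (n + 1) => Fin ((Fin.snoc pp q : Fin (n + 1) → ℕ) i)) with hG
  have hadj : ∀ u v : V, G.Adj u v ↔ u.1 ≠ v.1 := by
    intro u v
    simp [hG]
  -- classification of V
  set cV : V → Fin 3 := fun v =>
    if (v.1 : ℕ) < r then 0 else if (v.1 : ℕ) < n then 1 else 2 with hcV
  have hcV_part : ∀ u v : V, u.1 = v.1 → cV u = cV v := by
    intro u v h
    simp only [hcV, h]
  have hcv0 : ∀ v : V, cV v = 0 ↔ (v.1 : ℕ) < r := by
    intro v
    simp only [hcV]
    split_ifs with ha hb <;> simp_all <;> omega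
  have hcv1 : ∀ v : V, cV v = 1 ↔ (¬ (v.1 : ℕ) < r ∧ (v.1 : ℕ) < n) := by
    intro v
    simp only [hcV]
    split_ifs with ha hb <;> simp_all
  have hcv2 : ∀ v : V, cV v = 2 ↔ (¬ (v.1 : ℕ) < r ∧ ¬ (v.1 : ℕ) < n) := by
    intro v
    simp only [hcV]
    split_ifs with ha hb <;> simp_all
  -- fiber cardinalities
  have hsum0 : ∑ i ∈ univ.filter (fun i : Fin (n+1) => (i : ℕ) < r),
      (Fin.snoc pp q : Fin (n + 1) → ℕ) i = p := by
    rw [← h1, Finset.sum_filter, Finset.sum_filter, Fin.sum_univ_castSucc]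
    simp only [Fin.snoc_castSucc, Fin.coe_castSucc, Fin.val_last]
    rw [if_neg (by omega)]
    simp
  have hsum1 : ∑ i ∈ univ.filter (fun i : Fin (n+1) => ¬ (i : ℕ) < r ∧ (i : ℕ) < n),
      (Fin.snoc pp q : Fin (n + 1) → ℕ) i = p := by
    rw [← h2, Finset.sum_filter, Finset.sum_filter, Fin.sum_univ_castSucc]
    simp only [Fin.snoc_castSucc, Fin.coe_castSucc, Fin.val_last]
    rw [if_neg (by omega)]
    rw [add_zero]
    apply Finset.sum_congr rfl
    intro i _
    have : (i : ℕ) < n := i.isLt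
    by_cases hir : r ≤ (i : ℕ)
    · rw [if_pos ⟨by omega, this⟩, if_pos hir]
    · rw [if_neg (by omega), if_neg hir]
  have hsum2 : ∑ i ∈ univ.filter (fun i : Fin (n+1) => ¬ (i : ℕ) < r ∧ ¬ (i : ℕ) < n),
      (Fin.snoc pp q : Fin (n + 1) → ℕ) i = q := by
    rw [Finset.sum_filter, Fin.sum_univ_castSucc]
    simp only [Fin.snoc_castSucc, Fin.coe_castSucc, Fin.val_last]
    rw [if_pos ⟨by omega, by omega⟩, Fin.snoc_last]
    have : ∀ i : Fin n, (if ¬ (i : ℕ) < r ∧ ¬ (i : ℕ) < n then pp i else 0) = 0 := by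
      intro i
      rw [if_neg]
      push_neg
      intro _
      exact i.isLt
    rw [Finset.sum_congr rfl (fun i _ => this i), Finset.sum_const, smul_zero, zero_add]
  have hcard0 : Fintype.card {v : V // cV v = 0} = t1 + t2 := by
    rw [Fintype.card_congr (Equiv.subtypeEquivRight hcv0),
      card_fiber (Fin.snoc pp q) (fun i : Fin (n+1) => (i : ℕ) < r), hsum0]
    omega
  have hcard1 : Fintype.card {v : V // cV v = 1} = t2 + t1 := by
    rw [Fintype.card_congr (Equiv.subtypeEquivRight hcv1),
      card_fiber (Fin.snoc pp q) (fun i : Fin (n+1) => ¬ (i : ℕ) < r ∧ (i : ℕ) < n), hsum1]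
    omega
  have hcard2 : Fintype.card {v : V // cV v = 2} = q := by
    rw [Fintype.card_congr (Equiv.subtypeEquivRight hcv2),
      card_fiber (Fin.snoc pp q) (fun i : Fin (n+1) => ¬ (i : ℕ) < r ∧ ¬ (i : ℕ) < n), hsum2]
  have fib0 : {v : V // cV v = 0} ≃ {w : Wty t1 t2 q // sdW w = 0} :=
    (Fintype.equivOfCardEq (by rw [hcard0]; simp)).trans eW0
  have fib1 : {v : V // cV v = 1} ≃ {w : Wty t1 t2 q // sdW w = 1} :=
    (Fintype.equivOfCardEq (by rw [hcard1]; simp)).trans eW1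
  have fib2 : {v : V // cV v = 2} ≃ {w : Wty t1 t2 q // sdW w = 2} :=
    (Fintype.equivOfCardEq (by rw [hcard2]; simp)).trans eW2
  obtain ⟨e, hmap⟩ : ∃ e : V ≃ Wty t1 t2 q, ∀ v, sdW (e v) = cV v := by
    refine ⟨Equiv.ofFiberEquiv (f := cV) (g := sdW) (fun c =>
      match c with
      | ⟨0, _⟩ => fib0
      | ⟨1, _⟩ => fib1
      | ⟨2, _⟩ => fib2
      | ⟨m+3, hm⟩ => absurd hm (by omega)), fun v => Equiv.ofFiberEquiv_map _ v⟩
  -- the orientation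
  set D : V → V → Prop := fun u v => Dg F (e u) (e v) ∨
    (sdW (e u) = sdW (e v) ∧ G.Adj u v ∧ rkW (e u) < rkW (e v)) with hD
  have hDor : IsOrientation G D := by
    constructor
    · rintro u v (h | ⟨_, h, _⟩)
      · have hne := Dg_sd_ne F _ _ h
        rw [hmap, hmap] at hne
        rw [hadj]
        intro h1
        exact hne (hcV_part u v h1)
      · exact h
    · intro u v hAdj
      have hne1 : u.1 ≠ v.1 := (hadj u v).mp hAdj
      have hnev : u ≠ v := fun h => hne1 (congrArg Sigma.fst h)
      by_cases hs : sdW (e u) = sdW (e v)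
      · have hnDg1 : ¬ Dg F (e u) (e v) := fun h => Dg_sd_ne F _ _ h hs
        have hnDg2 : ¬ Dg F (e v) (e u) := fun h => Dg_sd_ne F _ _ h hs.symm
        have hrk : rkW (e u) ≠ rkW (e v) :=
          fun h => hnev (e.injective (rkW_inj _ _ hs h))
        constructor
        · rintro (h | ⟨_, _, hlt⟩)
          · exact absurd h hnDg1
          · rintro (h' | ⟨_, _, hlt'⟩)
            · exact hnDg2 h'
            · omega
        · intro h
          right
          refine ⟨hs, hAdj, ?_⟩
          by_contra hlt
          exact h (Or.inr ⟨hs.symm, hAdj.symm, by omega⟩)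
      · have hiff := Dg_asymm_iff F (e u) (e v) hs
        constructor
        · rintro (h | ⟨hss, _, _⟩)
          · rintro (h' | ⟨hss, _, _⟩)
            · exact hiff.mp h h'
            · exact hs hss.symm
          · exact absurd hss hs
        · intro h
          left
          apply hiff.mpr
          intro h'
          exact h (Or.inl h')
  have hP : ∀ u v : V, u ≠ v → D u v ∨ ∃ w, D u w ∧ D w v := by
    intro u v huv
    have := famOK_path F hF (by omega) (by omega) (e u) (e v)
      (fun h => huv (e.injective h))
    rcases this with h | ⟨z, h1, h2⟩
    · exact Or.inl (Or.inl h)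
    · refine Or.inr ⟨e.symm z, Or.inl ?_, Or.inl ?_⟩
      · rw [Equiv.apply_symm_apply]; exact h1
      · rw [Equiv.apply_symm_apply]; exact h2
  -- a nonadjacent pair
  have hlast : ((Fin.snoc pp q : Fin (n + 1) → ℕ) (Fin.last n)) = q := Fin.snoc_last _ _
  have hq2' : 2 ≤ ((Fin.snoc pp q : Fin (n + 1) → ℕ) (Fin.last n)) := by omega
  refine orientationNumber_eq_two D hDor hP
    ⟨Fin.last n, ⟨0, by omega⟩⟩ ⟨Fin.last n, ⟨1, by omega⟩⟩ ?_ ?_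
  · intro h
    have := congrArg (fun z : V => (z.2 : ℕ)) h
    simp at this
  · rw [hadj]
    simp
end
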